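/- arXiv:1201.6440 — 3 statements merged into one kernel-verified Lean document; each statement's English description precedes it below -/
import Mathlib

section
/- Assume n ≥ 7 and 3n − 2 ≤ N ≤ 4n − 6, and let F = (f, φ, g) satisfy the normalization (2.3) with κ₀ = 2 together with all the stated hypotheses. Then for every multi-index α in the z-variables with |α| = 1, the constant vector D_z^α Φ₁^{(1,2)} lies in the complex linear span of ê₁ and ê₂ in ℂ^{#S₁}. -/
open scoped BigOperators
open Complex

noncomputable section

/-- The domain `ℂ^{n-1} × ℂ` of maps defined near `0` (Siegel coordinates). -/
abbrev Dmn (n : ℕ) := (Fin (n-1) → ℂ) × ℂ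

/-- The weighted-expansion coefficient `H^{(k,j)}(z)`: the homogeneous part of degree `k`
in `z` of the coefficient of `w^j` in the Taylor expansion of `H` at `0`. -/
noncomputable def coeffKJ {n : ℕ} (H : Dmn n → ℂ) (k j : ℕ) (z : Fin (n-1) → ℂ) : ℂ :=
  (1 / ((Nat.factorial k : ℂ) * (Nat.factorial j : ℂ))) *
    iteratedDeriv k (fun t : ℂ => iteratedDeriv j (fun s : ℂ => H (t • z, s)) 0) 0

/-- `H = O_wt(s)`: all Taylor terms of `H` at `0` have weighted degree at least `s`. -/
def Owt {n : ℕ} (s : ℕ) (H : Dmn n → ℂ) : Prop :=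
  ∀ k j : ℕ, k + 2*j < s → ∀ z, coeffKJ H k j z = 0

/-- The index set `S₀ = {(j,l) : 1 ≤ j ≤ κ₀, j ≤ l ≤ n-1}` (in 0-based indexing). -/
abbrev S0 (n κ : ℕ) := {p : Fin κ × Fin (n-1) // p.1.val ≤ p.2.val}

/-- The constants `μ_{jl}`. -/
noncomputable def muJL {n κ : ℕ} (μ : Fin κ → ℝ) (p : S0 n κ) : ℝ :=
  if h : p.val.1.val < p.val.2.val ∧ p.val.2.val < κ then
    Real.sqrt (μ p.val.1 + μ ⟨p.val.2.val, h.2⟩)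
  else Real.sqrt (μ p.val.1)

/-- The normalization (2.3) of Huang–Ji–Xu for a map `F = (f, (Φ₀, Φ₁), g)` of geometric
rank `κ`, with `#S₁ = m = N - n - #S₀`. -/
structure Normalization23 (n N κ m : ℕ) (μ : Fin κ → ℝ)
    (f : Fin (n-1) → Dmn n → ℂ) (Φ₀ : S0 n κ → Dmn n → ℂ)
    (Φ₁ : Fin m → Dmn n → ℂ) (g : Dmn n → ℂ) where
  hn : 3 ≤ n
  hκ1 : 1 ≤ κ
  hκn : κ ≤ n - 2
  hκn1 : κ ≤ n - 1
  hm : n + Fintype.card (S0 n κ) + m = N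
  μpos : ∀ j, 0 < μ j
  U : Set (Dmn n)
  hU : U ∈ nhds (0 : Dmn n)
  hf_diff : ∀ l, DifferentiableOn ℂ (f l) U
  hΦ₀_diff : ∀ p, DifferentiableOn ℂ (Φ₀ p) U
  hΦ₁_diff : ∀ i, DifferentiableOn ℂ (Φ₁ i) U
  hg_diff : DifferentiableOn ℂ g U
  hf0 : ∀ l, f l 0 = 0
  hΦ₀0 : ∀ p, Φ₀ p 0 = 0
  hΦ₁0 : ∀ i, Φ₁ i 0 = 0
  hg0 : g 0 = 0
  /-- the basic (Chern–Moser) equation `Im g = |f|² + |φ|²` on `Im w = |z|²` -/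
  basic : ∀ q ∈ U, q.2.im = ∑ j, Complex.normSq (q.1 j) →
    (g q).im = (∑ l, Complex.normSq (f l q)) +
      ((∑ p : S0 n κ, Complex.normSq (Φ₀ p q)) + ∑ i, Complex.normSq (Φ₁ i q))
  hgw : ∀ q ∈ U, g q = q.2
  hf_tail : ∀ l : Fin (n-1), κ ≤ l.val → ∀ q ∈ U, f l q = q.1 l
  fstar : Fin (n-1) → Fin κ → Dmn n → ℂ
  hf_head : ∀ l : Fin (n-1), l.val < κ → ∀ q ∈ U,
    f l q = ∑ j : Fin κ, q.1 (Fin.castLE hκn1 j) * fstar l j q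
  bcoef : Fin (n-1) → Fin κ → Fin (n-1) → ℂ
  hfstar : ∀ (l : Fin (n-1)) (hl : l.val < κ) (j : Fin κ),
    Owt 4 (fun q => fstar l j q -
      ((if l.val = j.val then (1:ℂ) else 0)
        + (Complex.I/2) * (if l.val = j.val then (1:ℂ) else 0) * ((μ ⟨l.val, hl⟩ : ℝ) : ℂ) * q.2
        + (∑ mm, bcoef l j mm * q.1 mm) * q.2))
  φstar0 : S0 n κ → Fin κ → Dmn n → ℂ
  hφstar0 : ∀ p j, Owt 2 (φstar0 p j)
  hΦ₀eq : ∀ p : S0 n κ, ∀ q ∈ U,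
    Φ₀ p q = ((muJL μ p : ℝ) : ℂ) * q.1 (Fin.castLE hκn1 p.val.1) * q.1 p.val.2
      + ∑ j : Fin κ, q.1 (Fin.castLE hκn1 j) * φstar0 p j q
  φstar1 : Fin m → Fin κ → Dmn n → ℂ
  hφstar1 : ∀ i j, Owt 2 (φstar1 i j)
  hΦ₁eq : ∀ i, ∀ q ∈ U, Φ₁ i q = ∑ j : Fin κ, q.1 (Fin.castLE hκn1 j) * φstar1 i j q
  hΦ₁3 : ∀ i, Owt 3 (Φ₁ i)

/-- The vectors `e_j` with `Φ₀^{(1,1)}(z) = Σ_j e_j z_j`. -/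
noncomputable def eVec {n κ : ℕ} (h : κ ≤ n - 1) (Φ₀ : S0 n κ → Dmn n → ℂ)
    (j : Fin κ) (p : S0 n κ) : ℂ :=
  coeffKJ (Φ₀ p) 1 1 (Pi.single (Fin.castLE h j) 1)

/-- The vectors `ê_j` with `Φ₁^{(1,1)}(z) = Σ_j ê_j z_j`. -/
noncomputable def eHat {n κ m : ℕ} (h : κ ≤ n - 1) (Φ₁ : Fin m → Dmn n → ℂ)
    (j : Fin κ) (i : Fin m) : ℂ :=
  coeffKJ (Φ₁ i) 1 1 (Pi.single (Fin.castLE h j) 1)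

/-- `ξ_j(z) = Φ₀^{(2,0)}(z) · conj(e_j)`. -/
noncomputable def xiF {n κ : ℕ} (h : κ ≤ n - 1) (Φ₀ : S0 n κ → Dmn n → ℂ)
    (j : Fin κ) (z : Fin (n-1) → ℂ) : ℂ :=
  ∑ p : S0 n κ, coeffKJ (Φ₀ p) 2 0 z * (starRingEnd ℂ) (eVec h Φ₀ j p)

/-- `η_j^*(z) = φ^{(3,0)}(z) · conj(e_j^*)` (with `e_j^* = (e_j, ê_j)`). -/
noncomputable def etaStar {n κ m : ℕ} (h : κ ≤ n - 1) (Φ₀ : S0 n κ → Dmn n → ℂ)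
    (Φ₁ : Fin m → Dmn n → ℂ) (j : Fin κ) (z : Fin (n-1) → ℂ) : ℂ :=
  (∑ p : S0 n κ, coeffKJ (Φ₀ p) 3 0 z * (starRingEnd ℂ) (eVec h Φ₀ j p)) +
    ∑ i, coeffKJ (Φ₁ i) 3 0 z * (starRingEnd ℂ) (eHat h Φ₁ j i)

end

noncomputable section

/-- Siegel upper half-space `{(z,w) : Im w > |z|²}` with `z`-coordinates indexed by `ι`. -/
def SiegelSet (ι : Type*) [Fintype ι] : Set ((ι → ℂ) × ℂ) :=
  {q | ∑ i, Complex.normSq (q.1 i) < q.2.im}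

/-- `h` is a quotient of two polynomials on `D`. -/
def IsRatComp {ι : Type*} [Fintype ι] (D : Set ((ι → ℂ) × ℂ)) (h : ((ι → ℂ) × ℂ) → ℂ) : Prop :=
  ∃ P Q : MvPolynomial (ι ⊕ Unit) ℂ,
    ∀ q ∈ D, MvPolynomial.eval (Sum.elim q.1 fun _ => q.2) Q ≠ 0 ∧
      MvPolynomial.eval (Sum.elim q.1 fun _ => q.2) Q * h q =
        MvPolynomial.eval (Sum.elim q.1 fun _ => q.2) P

/-- Index type for the `z`-part of the target `ℂ^{N-1} × ℂ`: the `f`-block, the `Φ₀`-block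
and the `Φ₁`-block. -/
abbrev ZIdx (n κ m : ℕ) := Fin (n-1) ⊕ (S0 n κ ⊕ Fin m)

/-- The full map `F = (f, Φ₀, Φ₁, g)` assembled. -/
noncomputable def Fmap {n κ m : ℕ} (f : Fin (n-1) → Dmn n → ℂ) (Φ₀ : S0 n κ → Dmn n → ℂ)
    (Φ₁ : Fin m → Dmn n → ℂ) (g : Dmn n → ℂ) (q : Dmn n) : (ZIdx n κ m → ℂ) × ℂ :=
  (Sum.elim (fun l => f l q) (Sum.elim (fun p => Φ₀ p q) (fun i => Φ₁ i q)), g q)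

/-- The point of the affine subspace `L_ε` with free coordinates `(z₃,…,z_{n-1}, w)`
taken from `t`. -/
def Lpt (n : ℕ) (a b : (ℂ × ℂ) → Fin (n-1) → ℂ) (aw bw : (ℂ × ℂ) → ℂ)
    (ε : ℂ × ℂ) (t : Dmn n) : Dmn n :=
  (fun l => if l.val = 0 then
      (∑ mm : Fin (n-1), if 2 ≤ mm.val then a ε mm * t.1 mm else 0) + aw ε * t.2 + ε.1
    else if l.val = 1 then
      (∑ mm : Fin (n-1), if 2 ≤ mm.val then b ε mm * t.1 mm else 0) + bw ε * t.2 + ε.2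
    else t.1 l, t.2)

/-- There is a holomorphic family `L_ε` of codimension-two affine subspaces
(through the points `(ε, 0)`, with coefficients vanishing at `ε = 0`) on which every
component of `F = (f, Φ₀, Φ₁, g)` restricts to an affine-linear map. -/
def LinearOnSlices {n κ m : ℕ} (f : Fin (n-1) → Dmn n → ℂ) (Φ₀ : S0 n κ → Dmn n → ℂ)
    (Φ₁ : Fin m → Dmn n → ℂ) (g : Dmn n → ℂ) : Prop :=
  ∃ V ∈ nhds (0 : ℂ × ℂ), ∃ a b : (ℂ × ℂ) → Fin (n-1) → ℂ, ∃ aw bw : (ℂ × ℂ) → ℂ,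
    (∀ l, DifferentiableOn ℂ (fun ε => a ε l) V) ∧
    (∀ l, DifferentiableOn ℂ (fun ε => b ε l) V) ∧
    DifferentiableOn ℂ aw V ∧ DifferentiableOn ℂ bw V ∧
    a 0 = 0 ∧ b 0 = 0 ∧ aw 0 = 0 ∧ bw 0 = 0 ∧
    ∀ ε ∈ V, ∀ h : Dmn n → ℂ,
      h ∈ Set.range f ∪ Set.range Φ₀ ∪ Set.range Φ₁ ∪ {g} →
      ∃ (c₀ : ℂ) (cz : Fin (n-1) → ℂ) (cw : ℂ),
        ∀ t : Dmn n, Lpt n a b aw bw ε t ∈ SiegelSet (Fin (n-1)) →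
          h (Lpt n a b aw bw ε t) = c₀ + (∑ l, cz l * t.1 l) + cw * t.2

end

set_option maxRecDepth 8000

namespace Thm41Core

open Metric Filter
open scoped Topology

section Generic
variable {E : Type*} [NormedAddCommGroup E] [NormedSpace ℂ E]

/-- derivative along an affine line -/
lemma lineDeriv {F : Type*} [NormedAddCommGroup F] [NormedSpace ℂ F]
    {G : E → F} {G' : E →L[ℂ] F} {x v : E} {s₀ : ℂ}
    (h : HasFDerivAt G G' (x + s₀ • v)) :
    HasDerivAt (fun s : ℂ => G (x + s • v)) (G' v) s₀ := by
  have hc : HasDerivAt (fun s : ℂ => x + s • v) v s₀ := by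
    simpa using ((hasDerivAt_id s₀).smul_const v).const_add x
  exact h.comp_hasDerivAt s₀ hc

variable {H R : E → ℂ} {W : Set E} {ρ : ℝ}

structure Germ (H R : E → ℂ) (W : Set E) (ρ : ℝ) : Prop where
  hWo : IsOpen W
  hRA : AnalyticOnNhd ℂ R W
  hρ : 0 < ρ
  hball : Metric.ball (0 : E) ρ ⊆ W
  hHR : Set.EqOn H R (Metric.ball (0 : E) ρ)

namespace Germ

variable (hG : Germ H R W ρ)
include hG

lemma hF1A : AnalyticOnNhd ℂ (fderiv ℂ R) W := hG.hRA.fderiv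

lemma hMA : AnalyticOnNhd ℂ (fderiv ℂ (fderiv ℂ R)) W := hG.hRA.fderiv.fderiv

lemma h0W : (0 : E) ∈ W := hG.hball (mem_ball_self hG.hρ)

/-- `H` along a line has derivative given by `fderiv R`. -/
lemma keyS (x v : E) (s₀ : ℂ) (hx : x + s₀ • v ∈ Metric.ball (0 : E) ρ) :
    HasDerivAt (fun s : ℂ => H (x + s • v)) (fderiv ℂ R (x + s₀ • v) v) s₀ := by
  have hRd : HasFDerivAt R (fderiv ℂ R (x + s₀ • v)) (x + s₀ • v) :=
    ((hG.hRA _ (hG.hball hx)).differentiableAt).hasFDerivAt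
  have hline : HasDerivAt (fun s : ℂ => R (x + s • v)) (fderiv ℂ R (x + s₀ • v) v) s₀ :=
    lineDeriv hRd
  apply hline.congr_of_eventuallyEq
  have hcont : Continuous fun s : ℂ => x + s • v := by continuity
  have hmem : (fun s : ℂ => x + s • v) ⁻¹' (Metric.ball (0 : E) ρ) ∈ 𝓝 s₀ :=
    hcont.continuousAt.preimage_mem_nhds (isOpen_ball.mem_nhds hx)
  filter_upwards [hmem] with s hs
  exact hG.hHR hs

/-- symmetry of the second derivative -/
lemma keySymm (u w : E) :
    fderiv ℂ (fderiv ℂ R) 0 u w = fderiv ℂ (fderiv ℂ R) 0 w u := by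
  have hf : ∀ᶠ y in 𝓝 (0 : E), HasFDerivAt R (fderiv ℂ R y) y := by
    filter_upwards [hG.hWo.mem_nhds hG.h0W] with y hy
    exact ((hG.hRA y hy).differentiableAt).hasFDerivAt
  have hx : HasFDerivAt (fderiv ℂ R) (fderiv ℂ (fderiv ℂ R) 0) 0 :=
    (hG.hF1A 0 hG.h0W).differentiableAt.hasFDerivAt
  exact second_derivative_symmetric_of_eventually hf hx u w

/-- second derivative along a direction where `H` is affine vanishes. -/
lemma keyD (x₀ v : E) (c₀ cw : ℂ) (δ : ℝ) (hδ : 0 < δ)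
    (hseg : ∀ w ∈ Metric.ball (0 : ℂ) δ, x₀ + w • v ∈ Metric.ball (0 : E) ρ)
    (haff : ∀ w ∈ Metric.ball (0 : ℂ) δ, H (x₀ + w • v) = c₀ + cw * w) :
    fderiv ℂ (fderiv ℂ R) x₀ v v = 0 := by
  have hx₀ : x₀ ∈ Metric.ball (0 : E) ρ := by simpa using hseg 0 (mem_ball_self hδ)
  -- k w := fderiv R (x₀ + w v) v equals cw on the disc
  have hk : ∀ w ∈ Metric.ball (0 : ℂ) δ, fderiv ℂ R (x₀ + w • v) v = cw := by
    intro w hw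
    have h1 : HasDerivAt (fun s : ℂ => H (x₀ + s • v)) (fderiv ℂ R (x₀ + w • v) v) w :=
      hG.keyS x₀ v w (hseg w hw)
    have h2 : HasDerivAt (fun s : ℂ => c₀ + cw * s) cw w := by
      simpa using ((hasDerivAt_id w).const_mul cw).const_add c₀
    have h3 : HasDerivAt (fun s : ℂ => H (x₀ + s • v)) cw w := by
      apply h2.congr_of_eventuallyEq
      filter_upwards [isOpen_ball.mem_nhds hw] with s hs
      exact haff s hs
    exact h1.unique h3
  have hclm : HasDerivAt (fun w : ℂ => fderiv ℂ R (x₀ + w • v))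
      (fderiv ℂ (fderiv ℂ R) x₀ v) 0 := by
    have hd : HasFDerivAt (fderiv ℂ R) (fderiv ℂ (fderiv ℂ R) x₀) (x₀ + (0:ℂ) • v) := by
      simpa using ((hG.hF1A _ (hG.hball hx₀)).differentiableAt).hasFDerivAt
    exact lineDeriv hd
  have h4 : HasDerivAt (fun w : ℂ => fderiv ℂ R (x₀ + w • v) v)
      (fderiv ℂ (fderiv ℂ R) x₀ v v) 0 := by
    have := hclm.clm_apply (hasDerivAt_const (0:ℂ) v)
    simpa using this
  have h5 : HasDerivAt (fun _ : ℂ => cw) (fderiv ℂ (fderiv ℂ R) x₀ v v) 0 := by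
    apply h4.congr_of_eventuallyEq
    filter_upwards [isOpen_ball.mem_nhds (mem_ball_self hδ)] with s hs
    exact (hk s hs).symm
  have h6 := (hasDerivAt_const (0:ℂ) cw).unique h5
  exact h6.symm

end Germ
end Generic

end Thm41Core

namespace Thm41Core

open Metric Filter
open scoped Topology

section DmnPart

variable {n : ℕ}

/-- vertical unit vector -/
noncomputable def vZ (n : ℕ) : Dmn n := (0, 1)

noncomputable def MM (R : Dmn n → ℂ) : Dmn n → Dmn n →L[ℂ] Dmn n →L[ℂ] ℂ :=
  fderiv ℂ (fderiv ℂ R)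

noncomputable def ggf (R : Dmn n → ℂ) : Dmn n → ℂ := fun x => MM R x (vZ n) (vZ n)

noncomputable def LL (R : Dmn n → ℂ) : Dmn n →L[ℂ] ℂ := fderiv ℂ (ggf R) 0

variable {H R : Dmn n → ℂ} {W : Set (Dmn n)} {ρ : ℝ} (hG : Germ H R W ρ)
include hG

omit hG in
lemma norm_pair_lt {z : Fin (n-1) → ℂ} {s : ℂ} (h1 : ‖z‖ < ρ) (h2 : ‖s‖ < ρ) :
    ((z, s) : Dmn n) ∈ Metric.ball (0 : Dmn n) ρ := by
  rw [mem_ball_zero_iff, Prod.norm_def]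
  exact max_lt h1 h2

omit hG in
lemma line_eq (t : ℂ) (z : Fin (n-1) → ℂ) :
    (fun s : ℂ => H ((t • (z, (0:ℂ)) : Dmn n) + s • vZ n)) = fun s : ℂ => H (t • z, s) := by
  funext s
  congr 1
  simp [vZ, Prod.ext_iff]

lemma inner1 (z : Fin (n-1) → ℂ) (t : ℂ) (ht : ‖t • z‖ < ρ) :
    deriv (fun s : ℂ => H (t • z, s)) 0 = fderiv ℂ R (t • ((z, 0) : Dmn n)) (vZ n) := by
  have heq : (t • ((z, 0) : Dmn n)) + (0:ℂ) • vZ n = ((t • z, 0) : Dmn n) := by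
    simp [vZ, Prod.ext_iff]
  have hx : (t • ((z, 0) : Dmn n)) + (0:ℂ) • vZ n ∈ Metric.ball (0 : Dmn n) ρ := by
    rw [heq]
    exact norm_pair_lt (ρ := ρ) ht (by simpa using hG.hρ)
  have h1 := hG.keyS (t • ((z, 0) : Dmn n)) (vZ n) 0 hx
  rw [line_eq (H := H)] at h1
  rw [h1.deriv, heq]
  congr 1
  simp [Prod.ext_iff]

omit hG in
lemma fact_smul_pair (t : ℂ) (z : Fin (n-1) → ℂ) :
    (t • ((z, 0) : Dmn n)) = ((t • z, 0) : Dmn n) := by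
  simp [Prod.ext_iff]

lemma keyA (z : Fin (n-1) → ℂ) :
    coeffKJ H 1 1 z = MM R 0 ((z, 0) : Dmn n) (vZ n) := by
  have hδ : ∀ᶠ t : ℂ in 𝓝 0, ‖t • z‖ < ρ := by
    have hc : Continuous fun t : ℂ => ‖t • z‖ := (continuous_id.smul continuous_const).norm
    have : {t : ℂ | ‖t • z‖ < ρ} ∈ 𝓝 (0:ℂ) :=
      (isOpen_lt hc continuous_const).mem_nhds (by simpa using hG.hρ)
    exact this
  have hout : (fun t : ℂ => iteratedDeriv 1 (fun s : ℂ => H (t • z, s)) 0) =ᶠ[𝓝 (0:ℂ)]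
      (fun t : ℂ => fderiv ℂ R ((0 : Dmn n) + t • ((z, 0) : Dmn n)) (vZ n)) := by
    filter_upwards [hδ] with t ht
    rw [iteratedDeriv_one, inner1 hG z t ht]
    congr 1
    simp
  have h2 : HasDerivAt (fun t : ℂ => fderiv ℂ R ((0 : Dmn n) + t • ((z, 0) : Dmn n)) (vZ n))
      (MM R 0 ((z, 0) : Dmn n) (vZ n)) 0 := by
    have hd : HasFDerivAt (fderiv ℂ R) (MM R 0) ((0 : Dmn n) + (0:ℂ) • ((z, 0) : Dmn n)) := by
      simpa [MM] using ((hG.hF1A 0 hG.h0W).differentiableAt).hasFDerivAt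
    have hline := lineDeriv hd
    have := hline.clm_apply (hasDerivAt_const (0:ℂ) (vZ n))
    simpa using this
  have : iteratedDeriv 1 (fun t : ℂ => iteratedDeriv 1 (fun s : ℂ => H (t • z, s)) 0) 0
      = MM R 0 ((z, 0) : Dmn n) (vZ n) := by
    rw [iteratedDeriv_one, hout.deriv_eq, h2.deriv]
  rw [coeffKJ, this]
  norm_num [Nat.factorial]

lemma inner2 (z : Fin (n-1) → ℂ) (t : ℂ) (ht : ‖t • z‖ < ρ) :
    iteratedDeriv 2 (fun s : ℂ => H (t • z, s)) 0 = ggf R (t • ((z, 0) : Dmn n)) := by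
  have hmemW : t • ((z, 0) : Dmn n) ∈ Metric.ball (0 : Dmn n) ρ := by
    rw [fact_smul_pair]
    exact norm_pair_lt (ρ := ρ) ht (by simpa using hG.hρ)
  have hder : deriv (fun s : ℂ => H (t • z, s)) =ᶠ[𝓝 (0:ℂ)]
      (fun s : ℂ => fderiv ℂ R ((t • ((z, 0) : Dmn n)) + s • vZ n) (vZ n)) := by
    filter_upwards [ball_mem_nhds (0:ℂ) hG.hρ] with s hs
    have hx : (t • ((z, 0) : Dmn n)) + s • vZ n ∈ Metric.ball (0 : Dmn n) ρ := by
      have heq : (t • ((z, 0) : Dmn n)) + s • vZ n = ((t • z, s) : Dmn n) := by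
        simp [vZ, Prod.ext_iff]
      rw [heq]
      exact norm_pair_lt (ρ := ρ) ht (by simpa using hs)
    have h1 := hG.keyS (t • ((z, 0) : Dmn n)) (vZ n) s hx
    rw [line_eq (H := H)] at h1
    exact h1.deriv
  have h2 : HasDerivAt (fun s : ℂ => fderiv ℂ R ((t • ((z, 0) : Dmn n)) + s • vZ n) (vZ n))
      (MM R (t • ((z, 0) : Dmn n)) (vZ n) (vZ n)) 0 := by
    have hd : HasFDerivAt (fderiv ℂ R) (MM R (t • ((z, 0) : Dmn n)))
        ((t • ((z, 0) : Dmn n)) + (0:ℂ) • vZ n) := by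
      simpa [MM] using ((hG.hF1A _ (hG.hball hmemW)).differentiableAt).hasFDerivAt
    have hline := lineDeriv hd
    have := hline.clm_apply (hasDerivAt_const (0:ℂ) (vZ n))
    simpa using this
  have : iteratedDeriv 2 (fun s : ℂ => H (t • z, s)) 0
      = deriv (deriv (fun s : ℂ => H (t • z, s))) 0 := by
    rw [iteratedDeriv_succ, iteratedDeriv_one]
  rw [this, hder.deriv_eq, h2.deriv]
  rfl

lemma diff_ggf : HasFDerivAt (ggf R) (LL R) 0 := by
  have h1 : DifferentiableAt ℂ (MM R) 0 := (hG.hMA 0 hG.h0W).differentiableAt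
  have h2 : DifferentiableAt ℂ (ggf R) 0 :=
    (h1.clm_apply (differentiableAt_const _)).clm_apply (differentiableAt_const _)
  exact h2.hasFDerivAt

lemma keyB (z : Fin (n-1) → ℂ) :
    coeffKJ H 1 2 z = (1/2 : ℂ) * LL R ((z, 0) : Dmn n) := by
  have hδ : ∀ᶠ t : ℂ in 𝓝 0, ‖t • z‖ < ρ := by
    have hc : Continuous fun t : ℂ => ‖t • z‖ := (continuous_id.smul continuous_const).norm
    exact (isOpen_lt hc continuous_const).mem_nhds (by simpa using hG.hρ)
  have hout : (fun t : ℂ => iteratedDeriv 2 (fun s : ℂ => H (t • z, s)) 0) =ᶠ[𝓝 (0:ℂ)]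
      (fun t : ℂ => ggf R ((0 : Dmn n) + t • ((z, 0) : Dmn n))) := by
    filter_upwards [hδ] with t ht
    rw [inner2 hG z t ht]
    congr 1
    simp
  have h2 : HasDerivAt (fun t : ℂ => ggf R ((0 : Dmn n) + t • ((z, 0) : Dmn n)))
      (LL R ((z, 0) : Dmn n)) 0 := by
    have hd : HasFDerivAt (ggf R) (LL R) ((0 : Dmn n) + (0:ℂ) • ((z, 0) : Dmn n)) := by
      simpa using diff_ggf hG
    exact lineDeriv hd
  have : iteratedDeriv 1 (fun t : ℂ => iteratedDeriv 2 (fun s : ℂ => H (t • z, s)) 0) 0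
      = LL R ((z, 0) : Dmn n) := by
    rw [iteratedDeriv_one, hout.deriv_eq, h2.deriv]
  rw [coeffKJ, this]
  norm_num [Nat.factorial]

lemma keyC (v : Fin (n-1) → ℂ) :
    fderiv ℂ (fun y => coeffKJ H 1 2 y) 0 v = coeffKJ H 1 2 v := by
  set N : (Fin (n-1) → ℂ) →L[ℂ] Dmn n := ContinuousLinearMap.inl ℂ (Fin (n-1) → ℂ) ℂ with hN
  have hfun : (fun y => coeffKJ H 1 2 y) = fun y => (1/2 : ℂ) * LL R (N y) := by
    funext y
    rw [keyB hG y]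
    congr 1
  have hfd : HasFDerivAt (fun y => (1/2 : ℂ) * LL R (N y))
      ((1/2 : ℂ) • ((LL R).comp N)) 0 := by
    have : HasFDerivAt (fun y => ((LL R).comp N) y) ((LL R).comp N) 0 :=
      ((LL R).comp N).hasFDerivAt
    simpa using this.const_mul (1/2 : ℂ)
  rw [hfun, hfd.fderiv]
  rw [keyB hG v]
  simp [hN]

set_option maxHeartbeats 1000000 in
lemma keyE (Vf : ℂ → Dmn n) (Vd : Dmn n) (hV : HasDerivAt Vf Vd 0) (hV0 : Vf 0 = vZ n)
    (Er : Dmn n)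
    (hu : (fun σ : ℂ => MM R (σ • Er) (Vf σ) (Vf σ)) =ᶠ[𝓝 (0:ℂ)] fun _ => (0:ℂ)) :
    LL R Er + MM R 0 Vd (vZ n) + MM R 0 (vZ n) Vd = 0 := by
  have hMd : DifferentiableAt ℂ (MM R) 0 := (hG.hMA 0 hG.h0W).differentiableAt
  set T : Dmn n →L[ℂ] Dmn n →L[ℂ] Dmn n →L[ℂ] ℂ := fderiv ℂ (MM R) 0 with hT
  have hc : HasDerivAt (fun σ : ℂ => MM R (σ • Er)) (T Er) 0 := by
    have hd : HasFDerivAt (MM R) T ((0 : Dmn n) + (0:ℂ) • Er) := by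
      simpa using hMd.hasFDerivAt
    have := lineDeriv (F := Dmn n →L[ℂ] Dmn n →L[ℂ] ℂ) hd
    simpa using this
  -- identify (T Er) (vZ n) (vZ n) with LL R Er
  have hgg : HasDerivAt (fun σ : ℂ => ggf R (σ • Er)) (LL R Er) 0 := by
    have hd : HasFDerivAt (ggf R) (LL R) ((0 : Dmn n) + (0:ℂ) • Er) := by
      simpa using diff_ggf hG
    have := lineDeriv hd
    simpa using this
  have hgg2 : HasDerivAt (fun σ : ℂ => ggf R (σ • Er)) (T Er (vZ n) (vZ n)) 0 := by
    have h1 := hc.clm_apply (hasDerivAt_const (0:ℂ) (vZ n))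
    have h2 := h1.clm_apply (hasDerivAt_const (0:ℂ) (vZ n))
    simpa [ggf] using h2
  have hTL : T Er (vZ n) (vZ n) = LL R Er := hgg2.unique hgg
  -- derivative of the full product
  have hcv : HasDerivAt (fun σ : ℂ => MM R (σ • Er) (Vf σ))
      (T Er (Vf 0) + MM R ((0:ℂ) • Er) Vd) 0 := hc.clm_apply hV
  have huD : HasDerivAt (fun σ : ℂ => MM R (σ • Er) (Vf σ) (Vf σ))
      ((T Er (Vf 0) + MM R ((0:ℂ) • Er) Vd) (Vf 0) + MM R ((0:ℂ) • Er) (Vf 0) Vd) 0 :=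
    hcv.clm_apply hV
  have hz : deriv (fun σ : ℂ => MM R (σ • Er) (Vf σ) (Vf σ)) 0 = 0 := by
    rw [hu.deriv_eq]
    simp
  have := huD.deriv
  rw [hz] at this
  rw [hV0] at this
  simp only [zero_smul] at this
  rw [ContinuousLinearMap.add_apply, hTL] at this
  exact this.symm

end DmnPart



end Thm41Core

namespace Thm41Core

open Metric Filter
open scoped Topology

section PolyPart

variable {n : ℕ}

/-- evaluation of an `MvPolynomial` at the point `q` -/
noncomputable def evP (S : MvPolynomial (Fin (n-1) ⊕ Unit) ℂ) (q : Dmn n) : ℂ :=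
  MvPolynomial.eval (Sum.elim q.1 fun _ => q.2) S

lemma evP_analytic (S : MvPolynomial (Fin (n-1) ⊕ Unit) ℂ) (x : Dmn n) :
    AnalyticAt ℂ (fun q : Dmn n => evP S q) x := by
  have hcoord : ∀ i : Fin (n-1) ⊕ Unit,
      AnalyticAt ℂ (fun q : Dmn n => Sum.elim q.1 (fun _ => q.2) i) x := by
    rintro (l | u)
    · exact (((ContinuousLinearMap.proj l).comp
        (ContinuousLinearMap.fst ℂ (Fin (n-1) → ℂ) ℂ))).analyticAt x
    · exact (ContinuousLinearMap.snd ℂ (Fin (n-1) → ℂ) ℂ).analyticAt x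
  have h := AnalyticAt.aeval_mvPolynomial hcoord S
  have heq : (fun q : Dmn n => MvPolynomial.aeval (Sum.elim q.1 fun _ => q.2) S)
      = fun q : Dmn n => evP S q := by
    funext q
    rw [evP, ← MvPolynomial.coe_aeval_eq_eval]
    rfl
  rwa [heq] at h

lemma evP_continuous (S : MvPolynomial (Fin (n-1) ⊕ Unit) ℂ) :
    Continuous (fun q : Dmn n => evP S q) := by
  rw [continuous_iff_continuousAt]
  exact fun x => (evP_analytic S x).continuousAt

/-- the coordinates of a line, as one-variable polynomials -/
noncomputable def ψline (x₀ v : Dmn n) (i : Fin (n-1) ⊕ Unit) : Polynomial ℂ :=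
  Polynomial.C (Sum.elim x₀.1 (fun _ => x₀.2) i) +
    Polynomial.C (Sum.elim v.1 (fun _ => v.2) i) * Polynomial.X

lemma evalLine (x₀ v : Dmn n) (S : MvPolynomial (Fin (n-1) ⊕ Unit) ℂ) (w : ℂ) :
    evP S (x₀ + w • v) = Polynomial.eval w (MvPolynomial.aeval (ψline x₀ v) S) := by
  have h1 : Polynomial.eval w (MvPolynomial.aeval (ψline x₀ v) S)
      = (Polynomial.aeval w) ((MvPolynomial.aeval (ψline x₀ v)) S) := by
    rw [Polynomial.coe_aeval_eq_eval]
  have h2 : (Polynomial.aeval (R := ℂ) w).comp (MvPolynomial.aeval (ψline x₀ v))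
      = MvPolynomial.aeval (fun i => Polynomial.aeval w (ψline x₀ v i)) :=
    MvPolynomial.comp_aeval (ψline x₀ v) (Polynomial.aeval w)
  have h3 : (Polynomial.aeval (R := ℂ) w) ((MvPolynomial.aeval (ψline x₀ v)) S)
      = MvPolynomial.aeval (fun i => Polynomial.aeval w (ψline x₀ v i)) S := by
    rw [← h2]; rfl
  have h4 : (fun i => Polynomial.aeval (R := ℂ) w (ψline x₀ v i))
      = Sum.elim (x₀ + w • v).1 (fun _ => (x₀ + w • v).2) := by
    funext i
    rcases i with l | u
    · show Polynomial.aeval w (Polynomial.C (x₀.1 l) + Polynomial.C (v.1 l) * Polynomial.X)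
        = (x₀ + w • v).1 l
      rw [map_add, map_mul, Polynomial.aeval_C, Polynomial.aeval_C, Polynomial.aeval_X]
      show algebraMap ℂ ℂ (x₀.1 l) + algebraMap ℂ ℂ (v.1 l) * w = x₀.1 l + w * v.1 l
      simp [mul_comm]
    · show Polynomial.aeval w (Polynomial.C x₀.2 + Polynomial.C v.2 * Polynomial.X)
        = (x₀ + w • v).2
      rw [map_add, map_mul, Polynomial.aeval_C, Polynomial.aeval_C, Polynomial.aeval_X]
      show algebraMap ℂ ℂ x₀.2 + algebraMap ℂ ℂ v.2 * w = x₀.2 + w * v.2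
      simp [mul_comm]
  rw [h1, h3, h4, evP, ← MvPolynomial.coe_aeval_eq_eval]
  rfl

end PolyPart

section SiegelPart

lemma isOpen_siegel (ι : Type*) [Fintype ι] : IsOpen (SiegelSet ι) := by
  apply isOpen_lt
  · exact continuous_finset_sum _ fun i _ =>
      Complex.continuous_normSq.comp ((continuous_apply i).comp continuous_fst)
  · exact Complex.continuous_im.comp continuous_snd

end SiegelPart

end Thm41Core

namespace Thm41Core

open Metric Filter
open scoped Topology

section LptPart

variable {n : ℕ}

lemma single_smul' (r : Fin (n-1)) (c : ℂ) :
    c • (Pi.single r (1:ℂ) : Fin (n-1) → ℂ) = Pi.single r c := by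
  funext l
  by_cases h : l = r
  · subst h; simp
  · simp [Pi.single_eq_of_ne h]

/-- `Lpt` along the `w`-axis is an affine line. -/
lemma lpt_line (a b : (ℂ × ℂ) → Fin (n-1) → ℂ) (aw bw : (ℂ × ℂ) → ℂ)
    (idx0 idx1 : Fin (n-1)) (h0 : idx0.val = 0) (h1 : idx1.val = 1)
    (ε : ℂ × ℂ) (w : ℂ) :
    Lpt n a b aw bw ε ((0 : Fin (n-1) → ℂ), w)
      = ((Pi.single idx0 ε.1 + Pi.single idx1 ε.2, 0) : Dmn n)
        + w • ((Pi.single idx0 (aw ε) + Pi.single idx1 (bw ε), 1) : Dmn n) := by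
  have hne : idx0 ≠ idx1 := by
    intro h; rw [h, h1] at h0; exact absurd h0 one_ne_zero
  have hsum0 : ∀ c : Fin (n-1) → ℂ,
      (∑ mm : Fin (n-1), if 2 ≤ mm.val then c mm * (0 : Fin (n-1) → ℂ) mm else 0) = 0 := by
    intro c
    refine Finset.sum_eq_zero fun mm _ => ?_
    split <;> simp
  refine Prod.ext ?_ ?_
  · funext l
    simp only [Prod.fst_add, Prod.smul_fst, Pi.add_apply, Pi.smul_apply, smul_eq_mul]
    show (if l.val = 0 then _ else if l.val = 1 then _ else _) = _
    by_cases hl0 : l.val = 0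
    · have hL : l = idx0 := Fin.ext (by rw [hl0, h0])
      rw [if_pos hl0, hsum0, hL, Pi.single_eq_same, Pi.single_eq_of_ne hne,
        Pi.single_eq_same, Pi.single_eq_of_ne hne]
      ring
    · by_cases hl1 : l.val = 1
      · have hL : l = idx1 := Fin.ext (by rw [hl1, h1])
        rw [if_neg hl0, if_pos hl1, hsum0, hL, Pi.single_eq_same,
          Pi.single_eq_of_ne hne.symm, Pi.single_eq_same, Pi.single_eq_of_ne hne.symm]
        ring
      · rw [if_neg hl0, if_neg hl1]
        have hn0 : l ≠ idx0 := fun h => hl0 (by rw [h, h0])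
        have hn1 : l ≠ idx1 := fun h => hl1 (by rw [h, h1])
        rw [Pi.single_eq_of_ne hn0, Pi.single_eq_of_ne hn1,
          Pi.single_eq_of_ne hn0, Pi.single_eq_of_ne hn1]
        simp
  · show w = 0 + w * 1
    ring

lemma sum_single2 {k : ℕ} (idx0 idx1 : Fin k) (hne : idx0 ≠ idx1) (c1 c2 : ℂ) :
    (∑ l : Fin k, Complex.normSq ((Pi.single idx0 c1 + Pi.single idx1 c2 : Fin k → ℂ) l))
      = Complex.normSq c1 + Complex.normSq c2 := by
  have hfun : ∀ l : Fin k, Complex.normSq ((Pi.single idx0 c1 + Pi.single idx1 c2 : Fin k → ℂ) l)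
      = (if l = idx0 then Complex.normSq c1 else 0) +
        (if l = idx1 then Complex.normSq c2 else 0) := by
    intro l
    rw [Pi.add_apply]
    by_cases hl0 : l = idx0
    · rw [hl0, Pi.single_eq_same, Pi.single_eq_of_ne hne, if_pos rfl,
        if_neg hne]
      simp
    · by_cases hl1 : l = idx1
      · rw [hl1, Pi.single_eq_same, Pi.single_eq_of_ne hne.symm, if_neg (by rw [hl1] at hl0; exact hl0), if_pos rfl]
        simp
      · rw [Pi.single_eq_of_ne hl0, Pi.single_eq_of_ne hl1, if_neg hl0, if_neg hl1]
        simp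
  rw [Finset.sum_congr rfl fun l _ => hfun l, Finset.sum_add_distrib]
  rw [Finset.sum_ite_eq' Finset.univ idx0 (fun _ => Complex.normSq c1),
    Finset.sum_ite_eq' Finset.univ idx1 (fun _ => Complex.normSq c2)]
  simp

end LptPart

end Thm41Core

namespace Thm41Core

open Metric Filter
open scoped Topology

set_option maxHeartbeats 2000000 in
lemma main_case {n m : ℕ} (U : Set (Dmn n)) (hU : U ∈ 𝓝 (0 : Dmn n))
    (f : Fin (n-1) → Dmn n → ℂ) (Φ₀ : S0 n 2 → Dmn n → ℂ)
    (Φ₁ : Fin m → Dmn n → ℂ) (g : Dmn n → ℂ)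
    (hRat : ∀ i, IsRatComp (SiegelSet (Fin (n-1)) ∪ U) (Φ₁ i))
    (hLin : LinearOnSlices f Φ₀ Φ₁ g)
    (idx0 idx1 r : Fin (n-1)) (h0 : idx0.val = 0) (h1 : idx1.val = 1)
    (εdir : ℂ × ℂ) (hεd1 : ‖εdir.1‖ ≤ 1) (hεd2 : ‖εdir.2‖ ≤ 1)
    (hbase : ∀ σ : ℂ, (Pi.single idx0 (σ • εdir).1 + Pi.single idx1 (σ • εdir).2 : Fin (n-1) → ℂ)
        = Pi.single r σ) :
    (fun i : Fin m => fderiv ℂ (fun y => coeffKJ (Φ₁ i) 1 2 y) 0 (Pi.single r 1)) ∈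
      Submodule.span ℂ {(fun i : Fin m => coeffKJ (Φ₁ i) 1 1 (Pi.single idx0 1)),
        (fun i : Fin m => coeffKJ (Φ₁ i) 1 1 (Pi.single idx1 1))} := by
  classical
  have hne : idx0 ≠ idx1 := by
    intro h; rw [h, h1] at h0; exact absurd h0 one_ne_zero
  obtain ⟨V, hV, a, b, aw, bw, ha, hb, haw, hbw, ha0, hb0, haw0, hbw0, hkey⟩ := hLin
  -- derivatives of the slope functions at 0
  have hawd : DifferentiableAt ℂ aw 0 := haw.differentiableAt hV
  have hbwd : DifferentiableAt ℂ bw 0 := hbw.differentiableAt hV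
  set α : ℂ := fderiv ℂ aw 0 εdir with hα
  set β : ℂ := fderiv ℂ bw 0 εdir with hβ
  have hawline : HasDerivAt (fun σ : ℂ => aw (σ • εdir)) α 0 := by
    have hd : HasFDerivAt aw (fderiv ℂ aw 0) ((0 : ℂ × ℂ) + (0:ℂ) • εdir) := by
      simpa using hawd.hasFDerivAt
    simpa using lineDeriv hd
  have hbwline : HasDerivAt (fun σ : ℂ => bw (σ • εdir)) β 0 := by
    have hd : HasFDerivAt bw (fderiv ℂ bw 0) ((0 : ℂ × ℂ) + (0:ℂ) • εdir) := by
      simpa using hbwd.hasFDerivAt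
    simpa using lineDeriv hd
  set EA : Dmn n := ((Pi.single idx0 1, 0) : Dmn n) with hEA
  set EB : Dmn n := ((Pi.single idx1 1, 0) : Dmn n) with hEB
  set Er : Dmn n := ((Pi.single r 1, 0) : Dmn n) with hEr
  set Vf : ℂ → Dmn n :=
    fun σ => ((Pi.single idx0 (aw (σ • εdir)) + Pi.single idx1 (bw (σ • εdir)), 1) : Dmn n)
    with hVf
  set Vd : Dmn n := α • EA + β • EB with hVdd
  have hVfe : Vf = fun σ => vZ n + (aw (σ • εdir)) • EA + (bw (σ • εdir)) • EB := by
    funext σ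
    refine Prod.ext ?_ ?_
    · show Pi.single idx0 (aw (σ • εdir)) + Pi.single idx1 (bw (σ • εdir))
        = (0 : Fin (n-1) → ℂ) + aw (σ • εdir) • (Pi.single idx0 (1:ℂ) : Fin (n-1) → ℂ)
          + bw (σ • εdir) • (Pi.single idx1 (1:ℂ) : Fin (n-1) → ℂ)
      rw [single_smul', single_smul', zero_add]
    · show (1 : ℂ) = 1 + aw (σ • εdir) • (0:ℂ) + bw (σ • εdir) • (0:ℂ)
      simp
  have hVd : HasDerivAt Vf Vd 0 := by
    rw [hVfe, hVdd]
    exact ((hawline.smul_const EA).const_add (vZ n)).add (hbwline.smul_const EB)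
  have hVf0 : Vf 0 = vZ n := by
    rw [hVf]
    show ((Pi.single idx0 (aw ((0:ℂ) • εdir)) + Pi.single idx1 (bw ((0:ℂ) • εdir)), 1) : Dmn n)
      = vZ n
    rw [zero_smul, haw0, hbw0]
    simp [vZ]
  have hx₀Er : ∀ σ : ℂ,
      ((Pi.single idx0 (σ • εdir).1 + Pi.single idx1 (σ • εdir).2, 0) : Dmn n) = σ • Er := by
    intro σ
    refine Prod.ext ?_ ?_
    · rw [hbase σ]
      exact (single_smul' r σ).symm
    · simp [hEr]
  -- the per-component relation
  have main : ∀ i : Fin m, fderiv ℂ (fun y => coeffKJ (Φ₁ i) 1 2 y) 0 (Pi.single r 1)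
      = -α * coeffKJ (Φ₁ i) 1 1 (Pi.single idx0 1)
        + -β * coeffKJ (Φ₁ i) 1 1 (Pi.single idx1 1) := by
    intro i
    obtain ⟨P, Q, hPQ⟩ := hRat i
    have h0U : (0 : Dmn n) ∈ U := mem_of_mem_nhds hU
    have hQ0 : evP Q 0 ≠ 0 := (hPQ 0 (Or.inr h0U)).1
    set WQ : Set (Dmn n) := {q | evP Q q ≠ 0} with hWQ
    have hWQo : IsOpen WQ := isOpen_compl_singleton.preimage (evP_continuous Q)
    have hUW : U ∩ WQ ∈ 𝓝 (0 : Dmn n) := Filter.inter_mem hU (hWQo.mem_nhds hQ0)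
    obtain ⟨ρ, hρpos, hρsub⟩ := Metric.mem_nhds_iff.1 hUW
    set R : Dmn n → ℂ := fun q => evP P q / evP Q q with hR
    have hG : Germ (Φ₁ i) R WQ ρ := by
      refine ⟨hWQo, fun x hx => (evP_analytic P x).div (evP_analytic Q x) hx, hρpos,
        fun q hq => (hρsub hq).2, ?_⟩
      intro q hq
      have hq' := hρsub hq
      have hPQq := hPQ q (Or.inr hq'.1)
      rw [hR]
      rw [eq_div_iff hq'.2]
      rw [mul_comm]
      exact hPQq.2
    -- the eventual vanishing of the sliced second derivative
    have hu : (fun σ : ℂ => MM R (σ • Er) (Vf σ) (Vf σ)) =ᶠ[𝓝 (0:ℂ)] fun _ => (0:ℂ) := by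
      have hcdir : Continuous fun σ : ℂ => σ • εdir := continuous_id.smul continuous_const
      have hev1 : ∀ᶠ σ : ℂ in 𝓝 0, σ • εdir ∈ V :=
        hcdir.continuousAt.preimage_mem_nhds (by simpa using hV)
      have htaw : Filter.Tendsto (fun σ : ℂ => aw (σ • εdir)) (𝓝 0) (𝓝 0) := by
        have h1 : ContinuousAt aw ((0:ℂ) • εdir) := by
          simpa using hawd.continuousAt
        have h2 : ContinuousAt (fun σ : ℂ => aw (σ • εdir)) 0 :=
          ContinuousAt.comp h1 hcdir.continuousAt
        have h3 : aw ((0:ℂ) • εdir) = 0 := by rw [zero_smul, haw0]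
        simpa [ContinuousAt, h3, haw0] using h2
      have htbw : Filter.Tendsto (fun σ : ℂ => bw (σ • εdir)) (𝓝 0) (𝓝 0) := by
        have h1 : ContinuousAt bw ((0:ℂ) • εdir) := by
          simpa using hbwd.continuousAt
        have h2 : ContinuousAt (fun σ : ℂ => bw (σ • εdir)) 0 :=
          ContinuousAt.comp h1 hcdir.continuousAt
        have h3 : bw ((0:ℂ) • εdir) = 0 := by rw [zero_smul, hbw0]
        simpa [ContinuousAt, h3, hbw0] using h2
      have hev2 : ∀ᶠ σ : ℂ in 𝓝 0, aw (σ • εdir) ∈ Metric.ball (0:ℂ) (1/2) :=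
        htaw (Metric.ball_mem_nhds (0:ℂ) (by norm_num))
      have hev3 : ∀ᶠ σ : ℂ in 𝓝 0, bw (σ • εdir) ∈ Metric.ball (0:ℂ) (1/2) :=
        htbw (Metric.ball_mem_nhds (0:ℂ) (by norm_num))
      have hev4 : ∀ᶠ σ : ℂ in 𝓝 0, σ ∈ Metric.ball (0:ℂ) (min (1/8) (ρ/2)) :=
        Metric.ball_mem_nhds (0:ℂ) (by positivity)
      filter_upwards [hev1, hev2, hev3, hev4] with σ hσV hA' hB' hσ'
      rw [mem_ball_zero_iff] at hA' hB' hσ'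
      have hσ8 : ‖σ‖ < 1/8 := lt_of_lt_of_le hσ' (min_le_left _ _)
      have hσρ : ‖σ‖ < ρ/2 := lt_of_lt_of_le hσ' (min_le_right _ _)
      set ε : ℂ × ℂ := σ • εdir with hε
      set A : ℂ := aw ε with hA
      set B : ℂ := bw ε with hB
      set x₀ : Dmn n := ((Pi.single idx0 ε.1 + Pi.single idx1 ε.2, 0) : Dmn n) with hx₀
      set v : Dmn n := ((Pi.single idx0 A + Pi.single idx1 B, 1) : Dmn n) with hv
      have hε1 : ‖ε.1‖ ≤ ‖σ‖ := by
        rw [hε]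
        show ‖(σ • εdir).1‖ ≤ ‖σ‖
        rw [Prod.smul_fst, smul_eq_mul, norm_mul]
        calc ‖σ‖ * ‖εdir.1‖ ≤ ‖σ‖ * 1 := by
              exact mul_le_mul_of_nonneg_left hεd1 (norm_nonneg σ)
          _ = ‖σ‖ := mul_one _
      have hε2 : ‖ε.2‖ ≤ ‖σ‖ := by
        rw [hε]
        show ‖(σ • εdir).2‖ ≤ ‖σ‖
        rw [Prod.smul_snd, smul_eq_mul, norm_mul]
        calc ‖σ‖ * ‖εdir.2‖ ≤ ‖σ‖ * 1 := by
              exact mul_le_mul_of_nonneg_left hεd2 (norm_nonneg σ)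
          _ = ‖σ‖ := mul_one _
      -- coordinates of points on the line
      have hcoord : ∀ w : ℂ, (x₀ + w • v).1
          = (Pi.single idx0 (ε.1 + w * A) + Pi.single idx1 (ε.2 + w * B) : Fin (n-1) → ℂ) := by
        intro w
        funext l
        simp only [hx₀, hv, Prod.fst_add, Prod.smul_fst, Pi.add_apply, Pi.smul_apply, smul_eq_mul]
        by_cases hl0 : l = idx0
        · rw [hl0, Pi.single_eq_same, Pi.single_eq_same, Pi.single_eq_of_ne hne,
            Pi.single_eq_of_ne hne, Pi.single_eq_same, Pi.single_eq_of_ne hne]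
          ring
        · by_cases hl1 : l = idx1
          · rw [hl1, Pi.single_eq_same, Pi.single_eq_same, Pi.single_eq_of_ne hne.symm,
              Pi.single_eq_of_ne hne.symm, Pi.single_eq_same, Pi.single_eq_of_ne hne.symm]
            ring
          · rw [Pi.single_eq_of_ne hl0, Pi.single_eq_of_ne hl1, Pi.single_eq_of_ne hl0,
              Pi.single_eq_of_ne hl1, Pi.single_eq_of_ne hl0, Pi.single_eq_of_ne hl1]
            ring
      have hsnd : ∀ w : ℂ, (x₀ + w • v).2 = w := by
        intro w
        show (0 : ℂ) + w * 1 = w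
        ring
      -- the affine property from the slicing hypothesis
      obtain ⟨c₀, cz, cw, hcw⟩ := hkey ε hσV (Φ₁ i) (Or.inl (Or.inr ⟨i, rfl⟩))
      have hl := lpt_line a b aw bw idx0 idx1 h0 h1 ε
      have hAffS : ∀ w : ℂ, (x₀ + w • v) ∈ SiegelSet (Fin (n-1)) →
          Φ₁ i (x₀ + w • v) = c₀ + cw * w := by
        intro w hw
        have h2 := hcw ((0 : Fin (n-1) → ℂ), w) (by rw [hl w]; exact hw)
        rw [hl w] at h2
        have h2b : Φ₁ i (x₀ + w • v)
            = c₀ + (∑ l : Fin (n-1), cz l * ((0 : Fin (n-1) → ℂ), w).1 l) + cw * w := h2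
        simp only [Pi.zero_apply, mul_zero, Finset.sum_const_zero, add_zero] at h2b
        exact h2b
      -- polynomial identity along the line
      set pQ : Polynomial ℂ := MvPolynomial.aeval (ψline x₀ v) Q with hpQ
      set pP : Polynomial ℂ := MvPolynomial.aeval (ψline x₀ v) P with hpP
      set pA : Polynomial ℂ := Polynomial.C c₀ + Polynomial.C cw * Polynomial.X with hpA
      set D : Polynomial ℂ := pQ * pA - pP with hD
      have hroot : ∀ w : ℂ, (x₀ + w • v) ∈ SiegelSet (Fin (n-1)) → Polynomial.eval w D = 0 := by
        intro w hw
        have h₁ := hPQ (x₀ + w • v) (Or.inl hw)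
        have h₂ := hAffS w hw
        rw [hD]
        rw [Polynomial.eval_sub, Polynomial.eval_mul, hpA]
        rw [Polynomial.eval_add, Polynomial.eval_mul, Polynomial.eval_C, Polynomial.eval_C,
          Polynomial.eval_X]
        rw [hpQ, hpP, ← evalLine, ← evalLine]
        have hQH : evP Q (x₀ + w • v) * Φ₁ i (x₀ + w • v) = evP P (x₀ + w • v) := h₁.2
        rw [h₂] at hQH
        rw [← hQH]
        ring
      -- a Siegel point on the line
      have hW0 : (x₀ + (Complex.I/2) • v) ∈ SiegelSet (Fin (n-1)) := by
        have him : (Complex.I/2 : ℂ).im = 1/2 := by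
          simp [Complex.div_im]
        show (∑ l, Complex.normSq ((x₀ + (Complex.I/2) • v).1 l)) < (x₀ + (Complex.I/2) • v).2.im
        rw [hsnd, him]
        have := hcoord (Complex.I/2)
        rw [this, sum_single2 idx0 idx1 hne]
        have hw2 : ‖(Complex.I/2 : ℂ)‖ = 1/2 := by
          rw [norm_div]
          simp
        have hb1 : ‖ε.1 + (Complex.I/2) * A‖ ≤ 3/8 := by
          calc ‖ε.1 + (Complex.I/2) * A‖ ≤ ‖ε.1‖ + ‖(Complex.I/2) * A‖ := norm_add_le _ _
            _ ≤ 1/8 + 1/2 * (1/2) := by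
                rw [norm_mul, hw2]
                have := hε1.trans hσ8.le
                have h2 : (1/2 : ℝ) * ‖A‖ ≤ 1/2 * (1/2) :=
                  mul_le_mul_of_nonneg_left hA'.le (by norm_num)
                linarith
            _ = 3/8 := by norm_num
        have hb2 : ‖ε.2 + (Complex.I/2) * B‖ ≤ 3/8 := by
          calc ‖ε.2 + (Complex.I/2) * B‖ ≤ ‖ε.2‖ + ‖(Complex.I/2) * B‖ := norm_add_le _ _
            _ ≤ 1/8 + 1/2 * (1/2) := by
                rw [norm_mul, hw2]
                have := hε2.trans hσ8.le
                have h2 : (1/2 : ℝ) * ‖B‖ ≤ 1/2 * (1/2) :=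
                  mul_le_mul_of_nonneg_left hB'.le (by norm_num)
                linarith
            _ = 3/8 := by norm_num
        have hn1 : Complex.normSq (ε.1 + (Complex.I/2) * A) ≤ (3/8)^2 := by
          rw [Complex.normSq_eq_norm_sq]
          exact pow_le_pow_left₀ (norm_nonneg _) hb1 2
        have hn2 : Complex.normSq (ε.2 + (Complex.I/2) * B) ≤ (3/8)^2 := by
          rw [Complex.normSq_eq_norm_sq]
          exact pow_le_pow_left₀ (norm_nonneg _) hb2 2
        nlinarith
      have hWopen : IsOpen {w : ℂ | (x₀ + w • v) ∈ SiegelSet (Fin (n-1))} := by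
        have hc : Continuous fun w : ℂ => x₀ + w • v :=
          continuous_const.add (continuous_id.smul continuous_const)
        exact (isOpen_siegel (Fin (n-1))).preimage hc
      have hinf : {w : ℂ | (x₀ + w • v) ∈ SiegelSet (Fin (n-1))}.Infinite :=
        infinite_of_mem_nhds (Complex.I/2) (hWopen.mem_nhds hW0)
      have hD0 : D = 0 := by
        apply Polynomial.eq_zero_of_infinite_isRoot
        exact hinf.mono fun w hw => hroot w hw
      -- the affine property near 0
      have hsmall : ∀ w ∈ Metric.ball (0:ℂ) (ρ/2), (x₀ + w • v) ∈ Metric.ball (0 : Dmn n) ρ := by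
        intro w hw
        rw [mem_ball_zero_iff] at hw ⊢
        rw [Prod.norm_def]
        apply max_lt
        · rw [hcoord w]
          rw [pi_norm_lt_iff hρpos]
          intro l
          have hb1 : ‖ε.1 + w * A‖ < ρ := by
            calc ‖ε.1 + w * A‖ ≤ ‖ε.1‖ + ‖w‖ * ‖A‖ := by
                  rw [← norm_mul]; exact norm_add_le _ _
              _ < ρ/2 + ρ/2 * 1 := by
                  have h3 : ‖w‖ * ‖A‖ ≤ ‖w‖ * 1 := by
                    apply mul_le_mul_of_nonneg_left _ (norm_nonneg w)
                    linarith
                  have h4 : ‖ε.1‖ < ρ/2 := lt_of_le_of_lt hε1 hσρ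
                  nlinarith [norm_nonneg w, norm_nonneg A]
              _ = ρ := by ring
          have hb2 : ‖ε.2 + w * B‖ < ρ := by
            calc ‖ε.2 + w * B‖ ≤ ‖ε.2‖ + ‖w‖ * ‖B‖ := by
                  rw [← norm_mul]; exact norm_add_le _ _
              _ < ρ/2 + ρ/2 * 1 := by
                  have h3 : ‖w‖ * ‖B‖ ≤ ‖w‖ * 1 := by
                    apply mul_le_mul_of_nonneg_left _ (norm_nonneg w)
                    linarith
                  have h4 : ‖ε.2‖ < ρ/2 := lt_of_le_of_lt hε2 hσρ
                  nlinarith [norm_nonneg w, norm_nonneg B]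
              _ = ρ := by ring
          by_cases hl0 : l = idx0
          · rw [hl0, Pi.add_apply, Pi.single_eq_same, Pi.single_eq_of_ne hne, add_zero]
            exact hb1
          · by_cases hl1 : l = idx1
            · rw [hl1, Pi.add_apply, Pi.single_eq_same, Pi.single_eq_of_ne hne.symm, zero_add]
              exact hb2
            · rw [Pi.add_apply, Pi.single_eq_of_ne hl0, Pi.single_eq_of_ne hl1, add_zero]
              simpa using hρpos
        · rw [hsnd w]
          linarith
      have hAff2 : ∀ w ∈ Metric.ball (0:ℂ) (ρ/2), Φ₁ i (x₀ + w • v) = c₀ + cw * w := by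
        intro w hw
        have hmem := hsmall w hw
        have hUW' : (x₀ + w • v) ∈ U ∩ WQ := hρsub hmem
        have hQne : evP Q (x₀ + w • v) ≠ 0 := hUW'.2
        have hPQ' : evP Q (x₀ + w • v) * Φ₁ i (x₀ + w • v) = evP P (x₀ + w • v) :=
          (hPQ (x₀ + w • v) (Or.inr hUW'.1)).2
        have heval : Polynomial.eval w D = 0 := by rw [hD0]; simp
        rw [hD, Polynomial.eval_sub, sub_eq_zero, Polynomial.eval_mul, hpA,
          Polynomial.eval_add, Polynomial.eval_mul, Polynomial.eval_C, Polynomial.eval_C,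
          Polynomial.eval_X, hpQ, hpP, ← evalLine, ← evalLine] at heval
        have : evP Q (x₀ + w • v) * Φ₁ i (x₀ + w • v)
            = evP Q (x₀ + w • v) * (c₀ + cw * w) := by
          rw [hPQ', ← heval]
        exact mul_left_cancel₀ hQne this
      -- conclude: the second derivative along the slice vanishes
      have hkD := hG.keyD x₀ v c₀ cw (ρ/2) (by positivity) hsmall hAff2
      show MM R (σ • Er) (Vf σ) (Vf σ) = 0
      rw [← hx₀Er σ]
      exact hkD
    -- now apply keyE and symmetry
    have eq1 := keyE hG Vf Vd hVd hVf0 Er hu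
    have eq2 : LL R Er + (α * MM R 0 EA (vZ n) + β * MM R 0 EB (vZ n))
        + (α * MM R 0 (vZ n) EA + β * MM R 0 (vZ n) EB) = 0 := by
      rw [hVdd] at eq1
      simpa [map_add, map_smul, ContinuousLinearMap.add_apply,
        ContinuousLinearMap.smul_apply, smul_eq_mul] using eq1
    have hsym1 : MM R 0 (vZ n) EA = MM R 0 EA (vZ n) := hG.keySymm (vZ n) EA
    have hsym2 : MM R 0 (vZ n) EB = MM R 0 EB (vZ n) := hG.keySymm (vZ n) EB
    rw [hsym1, hsym2] at eq2
    have hXa : MM R 0 EA (vZ n) = coeffKJ (Φ₁ i) 1 1 (Pi.single idx0 1) := (keyA hG _).symm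
    have hXb : MM R 0 EB (vZ n) = coeffKJ (Φ₁ i) 1 1 (Pi.single idx1 1) := (keyA hG _).symm
    rw [hXa, hXb] at eq2
    rw [keyC hG, keyB hG]
    linear_combination (1/2 : ℂ) * eq2
  -- conclude span membership
  have hvec : (fun i : Fin m => fderiv ℂ (fun y => coeffKJ (Φ₁ i) 1 2 y) 0 (Pi.single r 1))
      = (-α) • (fun i : Fin m => coeffKJ (Φ₁ i) 1 1 (Pi.single idx0 1))
        + (-β) • (fun i : Fin m => coeffKJ (Φ₁ i) 1 1 (Pi.single idx1 1)) := by
    funext i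
    rw [main i]
    simp [mul_comm]
  rw [hvec]
  apply Submodule.add_mem
  · exact Submodule.smul_mem _ _ (Submodule.subset_span (Set.mem_insert _ _))
  · exact Submodule.smul_mem _ _ (Submodule.subset_span (Set.mem_insert_of_mem _ rfl))

end Thm41Core

namespace Thm41Core

open Metric Filter
open scoped Topology

set_option maxHeartbeats 1000000 in
lemma vanish_case {n m : ℕ} (U : Set (Dmn n)) (hU : U ∈ 𝓝 (0 : Dmn n))
    (Φ₁ : Fin m → Dmn n → ℂ) (i : Fin m)
    (hRat : IsRatComp (SiegelSet (Fin (n-1)) ∪ U) (Φ₁ i))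
    (r : Fin (n-1))
    (hvan : ∀ t s : ℂ, ((t • (Pi.single r 1 : Fin (n-1) → ℂ), s) : Dmn n) ∈ U →
      Φ₁ i ((t • (Pi.single r 1 : Fin (n-1) → ℂ), s) : Dmn n) = 0) :
    fderiv ℂ (fun y => coeffKJ (Φ₁ i) 1 2 y) 0 (Pi.single r 1) = 0 := by
  obtain ⟨P, Q, hPQ⟩ := hRat
  have h0U : (0 : Dmn n) ∈ U := mem_of_mem_nhds hU
  have hQ0 : evP Q 0 ≠ 0 := (hPQ 0 (Or.inr h0U)).1
  set WQ : Set (Dmn n) := {q | evP Q q ≠ 0} with hWQ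
  have hWQo : IsOpen WQ := isOpen_compl_singleton.preimage (evP_continuous Q)
  have hUW : U ∩ WQ ∈ 𝓝 (0 : Dmn n) := Filter.inter_mem hU (hWQo.mem_nhds hQ0)
  obtain ⟨ρ, hρpos, hρsub⟩ := Metric.mem_nhds_iff.1 hUW
  set R : Dmn n → ℂ := fun q => evP P q / evP Q q with hR
  have hG : Germ (Φ₁ i) R WQ ρ := by
    refine ⟨hWQo, fun x hx => (evP_analytic P x).div (evP_analytic Q x) hx, hρpos,
      fun q hq => (hρsub hq).2, ?_⟩
    intro q hq
    have hq' := hρsub hq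
    have hPQq : evP Q q * Φ₁ i q = evP P q := (hPQ q (Or.inr hq'.1)).2
    rw [hR, eq_div_iff hq'.2, mul_comm]
    exact hPQq
  rw [keyC hG]
  set z : Fin (n-1) → ℂ := Pi.single r 1 with hz
  have hzn : ‖z‖ ≤ 1 := by
    rw [hz]
    rw [pi_norm_le_iff_of_nonneg (by norm_num : (0:ℝ) ≤ 1)]
    intro l
    by_cases hl : l = r
    · rw [hl, Pi.single_eq_same]; norm_num
    · rw [Pi.single_eq_of_ne hl]; norm_num
  have hmem : ∀ t s : ℂ, ‖t‖ < ρ → ‖s‖ < ρ → ((t • z, s) : Dmn n) ∈ U := by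
    intro t s ht hs
    have h1 : ‖t • z‖ < ρ := by
      rw [norm_smul]
      calc ‖t‖ * ‖z‖ ≤ ‖t‖ * 1 := mul_le_mul_of_nonneg_left hzn (norm_nonneg t)
        _ = ‖t‖ := mul_one _
        _ < ρ := ht
    exact (hρsub (norm_pair_lt (ρ := ρ) h1 hs)).1
  have hfun : (fun t : ℂ => iteratedDeriv 2 (fun s : ℂ => Φ₁ i (t • z, s)) 0) =ᶠ[𝓝 (0:ℂ)]
      fun _ => (0:ℂ) := by
    filter_upwards [Metric.ball_mem_nhds (0:ℂ) hρpos] with t ht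
    rw [mem_ball_zero_iff] at ht
    have hd : deriv (fun s : ℂ => Φ₁ i (t • z, s)) =ᶠ[𝓝 (0:ℂ)] fun _ => (0:ℂ) := by
      filter_upwards [Metric.ball_mem_nhds (0:ℂ) hρpos] with s hs
      rw [mem_ball_zero_iff] at hs
      have hloc : (fun s' : ℂ => Φ₁ i (t • z, s')) =ᶠ[𝓝 s] fun _ => (0:ℂ) := by
        filter_upwards [isOpen_ball.mem_nhds (mem_ball_zero_iff.2 hs)] with s' hs'
        rw [mem_ball_zero_iff] at hs'
        exact hvan t s' (hmem t s' ht hs')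
      rw [hloc.deriv_eq, deriv_const]
    rw [iteratedDeriv_succ, iteratedDeriv_one, hd.deriv_eq, deriv_const]
  show coeffKJ (Φ₁ i) 1 2 z = 0
  rw [coeffKJ, iteratedDeriv_one, hfun.deriv_eq, deriv_const, mul_zero]

end Thm41Core


/-- Theorem 4.1 (3): every first-order partial derivative of
`Φ₁^{(1,2)}` lies in `span{ê₁, ê₂}`. -/
theorem theorem41_part3 (n N m : ℕ) (hn : 7 ≤ n) (hN1 : 3*n ≤ N + 2) (hN2 : N + 6 ≤ 4*n)
    (μ : Fin 2 → ℝ)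
    (f : Fin (n-1) → Dmn n → ℂ) (Φ₀ : S0 n 2 → Dmn n → ℂ)
    (Φ₁ : Fin m → Dmn n → ℂ) (g : Dmn n → ℂ)
    (hF : Normalization23 n N 2 m μ f Φ₀ Φ₁ g)
    (hm0 : 0 < m)
    (hHolo : DifferentiableOn ℂ (Fmap f Φ₀ Φ₁ g) (SiegelSet (Fin (n-1))))
    (hMaps : Set.MapsTo (Fmap f Φ₀ Φ₁ g) (SiegelSet (Fin (n-1))) (SiegelSet (ZIdx n 2 m)))
    (hProper : ∀ K ⊆ SiegelSet (ZIdx n 2 m), IsCompact K →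
      IsCompact (SiegelSet (Fin (n-1)) ∩ Fmap f Φ₀ Φ₁ g ⁻¹' K))
    (hRatf : ∀ l, IsRatComp (SiegelSet (Fin (n-1)) ∪ hF.U) (f l))
    (hRatΦ₀ : ∀ p, IsRatComp (SiegelSet (Fin (n-1)) ∪ hF.U) (Φ₀ p))
    (hRatΦ₁ : ∀ i, IsRatComp (SiegelSet (Fin (n-1)) ∪ hF.U) (Φ₁ i))
    (hRatg : IsRatComp (SiegelSet (Fin (n-1)) ∪ hF.U) g)
    (hLin : LinearOnSlices f Φ₀ Φ₁ g)
    (hΦ₁30 : (∀ z : Fin (n-1) → ℂ,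
        coeffKJ (Φ₁ ⟨0, hm0⟩) 3 0 z =
          (2 / ((Real.sqrt (μ 0 + μ 1) : ℝ) : ℂ)) *
            (((Real.sqrt (μ 0 / μ 1) : ℝ) : ℂ) * z (Fin.castLE hF.hκn1 0) * xiF hF.hκn1 Φ₀ 1 z
              - ((Real.sqrt (μ 1 / μ 0) : ℝ) : ℂ) * z (Fin.castLE hF.hκn1 1) * xiF hF.hκn1 Φ₀ 0 z))
      ∧ ∀ i : Fin m, i ≠ ⟨0, hm0⟩ → ∀ z : Fin (n-1) → ℂ, coeffKJ (Φ₁ i) 3 0 z = 0) :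
    ∀ r : Fin (n-1),
      (fun i : Fin m => fderiv ℂ (fun y => coeffKJ (Φ₁ i) 1 2 y) 0 (Pi.single r 1)) ∈
        Submodule.span ℂ {eHat hF.hκn1 Φ₁ 0, eHat hF.hκn1 Φ₁ 1} := by
  classical
  intro r
  have h0 : (Fin.castLE hF.hκn1 (0 : Fin 2)).val = 0 := rfl
  have h1 : (Fin.castLE hF.hκn1 (1 : Fin 2)).val = 1 := rfl
  by_cases hr0 : (r : ℕ) = 0
  · have hre : r = Fin.castLE hF.hκn1 (0 : Fin 2) := Fin.ext (by rw [hr0, h0])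
    have hbase : ∀ σ : ℂ,
        (Pi.single (Fin.castLE hF.hκn1 (0 : Fin 2)) (σ • ((1:ℂ),(0:ℂ))).1
          + Pi.single (Fin.castLE hF.hκn1 (1 : Fin 2)) (σ • ((1:ℂ),(0:ℂ))).2
            : Fin (n-1) → ℂ) = Pi.single r σ := by
      intro σ
      rw [hre]
      have e1 : (σ • ((1:ℂ),(0:ℂ))).1 = σ := by simp
      have e2 : (σ • ((1:ℂ),(0:ℂ))).2 = 0 := by simp
      rw [e1, e2, Pi.single_zero, add_zero]
    exact Thm41Core.main_case hF.U hF.hU f Φ₀ Φ₁ g hRatΦ₁ hLin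
      (Fin.castLE hF.hκn1 (0 : Fin 2)) (Fin.castLE hF.hκn1 (1 : Fin 2)) r h0 h1
      ((1:ℂ),(0:ℂ)) (by simp) (by simp) hbase
  · by_cases hr1 : (r : ℕ) = 1
    · have hre : r = Fin.castLE hF.hκn1 (1 : Fin 2) := Fin.ext (by rw [hr1, h1])
      have hbase : ∀ σ : ℂ,
          (Pi.single (Fin.castLE hF.hκn1 (0 : Fin 2)) (σ • ((0:ℂ),(1:ℂ))).1
            + Pi.single (Fin.castLE hF.hκn1 (1 : Fin 2)) (σ • ((0:ℂ),(1:ℂ))).2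
              : Fin (n-1) → ℂ) = Pi.single r σ := by
        intro σ
        rw [hre]
        have e1 : (σ • ((0:ℂ),(1:ℂ))).1 = 0 := by simp
        have e2 : (σ • ((0:ℂ),(1:ℂ))).2 = σ := by simp
        rw [e1, e2, Pi.single_zero, zero_add]
      exact Thm41Core.main_case hF.U hF.hU f Φ₀ Φ₁ g hRatΦ₁ hLin
        (Fin.castLE hF.hκn1 (0 : Fin 2)) (Fin.castLE hF.hκn1 (1 : Fin 2)) r h0 h1
        ((0:ℂ),(1:ℂ)) (by simp) (by simp) hbase
    · have hvec : (fun i : Fin m =>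
          fderiv ℂ (fun y => coeffKJ (Φ₁ i) 1 2 y) 0 (Pi.single r 1)) = (0 : Fin m → ℂ) := by
        funext i
        apply Thm41Core.vanish_case hF.U hF.hU Φ₁ i (hRatΦ₁ i) r
        intro t s hmem
        rw [hF.hΦ₁eq i _ hmem]
        apply Finset.sum_eq_zero
        intro j _
        have hj : (Fin.castLE hF.hκn1 j) ≠ r := by
          intro h
          have hval : (j : ℕ) = (r : ℕ) := by
            have := congrArg Fin.val h
            simpa using this
          have hj2 : (j : ℕ) < 2 := j.isLt
          omega
        have hcoord : ((t • (Pi.single r 1 : Fin (n-1) → ℂ), s) : Dmn n).1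
            (Fin.castLE hF.hκn1 j) = 0 := by
          show (t • (Pi.single r 1 : Fin (n-1) → ℂ)) (Fin.castLE hF.hκn1 j) = 0
          rw [Pi.smul_apply, Pi.single_eq_of_ne hj, smul_zero]
        rw [hcoord, zero_mul]
      rw [hvec]
      exact Submodule.zero_mem _
end

section
/- For h = 1, 2 let Γ_j^{[h]} (1 ≤ j ≤ κ₀) be holomorphic functions of z ∈ ℂ^{n−1}, and define functions Λ_{jl}^{[h]} for (j, l) ∈ S₀ by: μ_{jl} Λ_{jl}^{[h]}(z) = 2i(z_j Γ_l^{[h]}(z) + z_l Γ_j^{[h]}(z)) for j < l ≤ κ₀; μ_{jj} Λ_{jj}^{[h]}(z) = 2i z_j Γ_j^{[h]}(z) for j ≤ κ₀; and μ_{jl} Λ_{jl}^{[h]}(z) = 2i z_l Γ_j^{[h]}(z) for j ≤ κ₀ < l. Then Σ_{(j,l)∈S₀} conj(Λ_{jl}^{[1]}(z)) Λ_{jl}^{[2]}(z) = 4|z|² Σ_{j≤κ₀} (1/μ_j) conj(Γ_j^{[1]}(z)) Γ_j^{[2]}(z) − Σ_{j<l≤κ₀} (4/(μ_j μ_l (μ_j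 + μ_l))) (μ_j conj(z_j) conj(Γ_l^{[1]}(z)) − μ_l conj(z_l) conj(Γ_j^{[1]}(z))) · (μ_j z_j Γ_l^{[2]}(z) − μ_l z_l Γ_j^{[2]}(z)) for all z ∈ ℂ^{n−1}. -/
open scoped BigOperators
open Complex

noncomputable section

/-- The right-hand sides `2i(z_jΓ_l + z_lΓ_j)`, `2iz_jΓ_j`, `2iz_lΓ_j` of the defining
equations in Lemma 3.1, according to the position of `(j,l) ∈ S₀`. -/
noncomputable def lamRHS {n κ : ℕ} (h : κ ≤ n - 1) (Γ : Fin κ → (Fin (n-1) → ℂ) → ℂ)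
    (p : S0 n κ) (z : Fin (n-1) → ℂ) : ℂ :=
  if hp : p.val.2.val < κ then
    if p.val.1.val = p.val.2.val then
      2 * Complex.I * (z (Fin.castLE h p.val.1) * Γ p.val.1 z)
    else
      2 * Complex.I * (z (Fin.castLE h p.val.1) * Γ ⟨p.val.2.val, hp⟩ z
        + z p.val.2 * Γ p.val.1 z)
  else 2 * Complex.I * (z p.val.2 * Γ p.val.1 z)

end


lemma my_sum_subtype {α : Type*} [Fintype α] (P : α → Prop) [DecidablePred P]
    (g : {x // P x} → ℂ) :
    ∑ p : {x // P x}, g p = ∑ x : α, (if h : P x then g ⟨x, h⟩ else 0) := by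
  classical
  rw [show (∑ x : α, (if h : P x then g ⟨x, h⟩ else 0))
      = ∑ x ∈ Finset.univ.filter P, (if h : P x then g ⟨x, h⟩ else 0) from
    (Finset.sum_filter_of_ne (by intro x _ hx; by_contra h; exact hx (dif_neg h))).symm]
  rw [Finset.sum_subtype (p := P) (Finset.univ.filter P) (fun x => by simp)
    (fun x => if h : P x then g ⟨x, h⟩ else 0)]
  exact Finset.sum_congr rfl fun p _ => by rw [dif_pos p.2]

lemma my_sum_split {a b : ℕ} (h : a ≤ b) (f : Fin b → ℂ)
    (h0 : ∀ l : Fin b, a ≤ l.val → f l = 0) :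
    ∑ l, f l = ∑ l : Fin a, f (Fin.castLE h l) := by
  classical
  have e1 : ∑ l : Fin b, f l = ∑ i ∈ Finset.range b,
      (if hi : i < b then f ⟨i, hi⟩ else 0) := by
    rw [← Fin.sum_univ_eq_sum_range (fun i => if hi : i < b then f ⟨i, hi⟩ else 0) b]
    exact Finset.sum_congr rfl fun l _ => by rw [dif_pos l.isLt]
  have e2 : ∑ l : Fin a, f (Fin.castLE h l) = ∑ i ∈ Finset.range a,
      (if hi : i < b then f ⟨i, hi⟩ else 0) := by
    rw [← Fin.sum_univ_eq_sum_range (fun i => if hi : i < b then f ⟨i, hi⟩ else 0) a]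
    refine Finset.sum_congr rfl fun l _ => ?_
    rw [dif_pos (lt_of_lt_of_le l.isLt h)]
    exact congrArg f (Fin.ext rfl)
  rw [e1, e2]
  refine (Finset.sum_subset (Finset.range_subset_range.2 h) fun i hib hia => ?_).symm
  rw [dif_pos (Finset.mem_range.1 hib)]
  exact h0 _ (le_of_not_gt (fun hh => hia (Finset.mem_range.2 hh)))

lemma my_antisym {κ : ℕ} (D : Fin κ → Fin κ → ℂ)
    (h : ∀ j l, D j l + D l j = 0) : (∑ j, ∑ l, D j l) = 0 := by
  have h2 : (∑ j, ∑ l, D j l) + (∑ j, ∑ l, D j l) = 0 := by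
    nth_rewrite 1 [Finset.sum_comm]
    rw [← Finset.sum_add_distrib]
    refine Finset.sum_eq_zero fun j _ => ?_
    rw [← Finset.sum_add_distrib]
    exact Finset.sum_eq_zero fun l _ => h l j
  linear_combination h2 / 2

/-- Lemma 3.1: the polarization identity for the vectors
`Λ^{[1]}, Λ^{[2]}` determined by `Γ^{[1]}, Γ^{[2]}`. -/
theorem lemma31 (n κ : ℕ) (hn : 3 ≤ n) (hκ1 : 1 ≤ κ) (hκ2 : κ ≤ n - 2) (hκn1 : κ ≤ n - 1)
    (μ : Fin κ → ℝ) (hμ : ∀ j, 0 < μ j)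
    (Γ1 Γ2 : Fin κ → (Fin (n-1) → ℂ) → ℂ)
    (hΓ1 : ∀ j, Differentiable ℂ (Γ1 j)) (hΓ2 : ∀ j, Differentiable ℂ (Γ2 j))
    (Λ1 Λ2 : S0 n κ → (Fin (n-1) → ℂ) → ℂ)
    (hΛ1 : ∀ (p : S0 n κ) (z : Fin (n-1) → ℂ),
      ((muJL μ p : ℝ) : ℂ) * Λ1 p z = lamRHS hκn1 Γ1 p z)
    (hΛ2 : ∀ (p : S0 n κ) (z : Fin (n-1) → ℂ),
      ((muJL μ p : ℝ) : ℂ) * Λ2 p z = lamRHS hκn1 Γ2 p z) :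
    ∀ z : Fin (n-1) → ℂ,
      ∑ p : S0 n κ, (starRingEnd ℂ) (Λ1 p z) * Λ2 p z =
        4 * ((∑ jj, Complex.normSq (z jj) : ℝ) : ℂ) *
          (∑ j, (1 / ((μ j : ℝ) : ℂ)) * (starRingEnd ℂ) (Γ1 j z) * Γ2 j z)
        - ∑ j : Fin κ, ∑ l : Fin κ, (if j.val < l.val then
            (4 / (((μ j : ℝ) : ℂ) * ((μ l : ℝ) : ℂ) * (((μ j : ℝ) : ℂ) + ((μ l : ℝ) : ℂ)))) *
              ((((μ j : ℝ) : ℂ) * (starRingEnd ℂ) (z (Fin.castLE hκn1 j)) * (starRingEnd ℂ) (Γ1 l z)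
                - ((μ l : ℝ) : ℂ) * (starRingEnd ℂ) (z (Fin.castLE hκn1 l)) * (starRingEnd ℂ) (Γ1 j z)) *
               (((μ j : ℝ) : ℂ) * z (Fin.castLE hκn1 j) * Γ2 l z
                - ((μ l : ℝ) : ℂ) * z (Fin.castLE hκn1 l) * Γ2 j z))
          else 0) := by
  classical
  intro z
  -- nonvanishing facts
  have hμne : ∀ j : Fin κ, ((μ j : ℝ) : ℂ) ≠ 0 := fun j =>
    Complex.ofReal_ne_zero.2 (ne_of_gt (hμ j))
  have hμμne : ∀ j l : Fin κ, ((μ j : ℝ) : ℂ) + ((μ l : ℝ) : ℂ) ≠ 0 := fun j l => by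
    rw [← Complex.ofReal_add]
    exact Complex.ofReal_ne_zero.2 (ne_of_gt (add_pos (hμ j) (hμ l)))
  have hm0 : ∀ X Y : ℂ, (starRingEnd ℂ) (2 * Complex.I * X) * (2 * Complex.I * Y)
      = 4 * (starRingEnd ℂ) X * Y := by
    intro X Y
    simp only [map_mul, Complex.conj_I, map_ofNat]
    have : Complex.I * Complex.I = -1 := Complex.I_mul_I
    ring_nf
    rw [Complex.I_sq]
    ring
  have hMpos : ∀ p : S0 n κ, 0 < muJL μ p := by
    intro p
    unfold muJL
    by_cases h : p.val.1.val < p.val.2.val ∧ p.val.2.val < κ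
    · rw [dif_pos h]; exact Real.sqrt_pos.2 (add_pos (hμ _) (hμ _))
    · rw [dif_neg h]; exact Real.sqrt_pos.2 (hμ _)
  have hMsq : ∀ p : S0 n κ, ((muJL μ p : ℝ) : ℂ) ^ 2 =
      if h : p.val.1.val < p.val.2.val ∧ p.val.2.val < κ then
        ((μ p.val.1 : ℝ) : ℂ) + ((μ (⟨p.val.2.val, h.2⟩ : Fin κ) : ℝ) : ℂ)
      else ((μ p.val.1 : ℝ) : ℂ) := by
    intro p
    unfold muJL
    by_cases h : p.val.1.val < p.val.2.val ∧ p.val.2.val < κ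
    · rw [dif_pos h, dif_pos h, ← Complex.ofReal_pow,
        Real.sq_sqrt (le_of_lt (add_pos (hμ _) (hμ _))), Complex.ofReal_add]
    · rw [dif_neg h, dif_neg h, ← Complex.ofReal_pow, Real.sq_sqrt (hμ _).le]
  -- the key pointwise formula
  have key : ∀ p : S0 n κ, (starRingEnd ℂ) (Λ1 p z) * Λ2 p z =
      (starRingEnd ℂ) (lamRHS hκn1 Γ1 p z) * lamRHS hκn1 Γ2 p z /
        ((muJL μ p : ℝ) : ℂ) ^ 2 := by
    intro p
    have hM : ((muJL μ p : ℝ) : ℂ) ≠ 0 := Complex.ofReal_ne_zero.2 (ne_of_gt (hMpos p))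
    have h1 := congrArg (starRingEnd ℂ) (hΛ1 p z)
    rw [map_mul, Complex.conj_ofReal] at h1
    have h2 := hΛ2 p z
    rw [eq_div_iff (pow_ne_zero 2 hM)]
    rw [← h1, ← h2]; ring
  -- the summands as functions on the product index set
  set F : Fin κ → Fin (n-1) → ℂ := fun j l =>
    if h : j.val ≤ l.val then
      (starRingEnd ℂ) (lamRHS hκn1 Γ1 (⟨(j, l), h⟩ : S0 n κ) z) *
        lamRHS hκn1 Γ2 (⟨(j, l), h⟩ : S0 n κ) z /
        ((muJL μ (⟨(j, l), h⟩ : S0 n κ) : ℝ) : ℂ) ^ 2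
    else 0 with hFdef
  set s : Fin κ → ℂ := fun j => (1 / ((μ j : ℝ) : ℂ)) * (starRingEnd ℂ) (Γ1 j z) * Γ2 j z
    with hsdef
  set G : Fin κ → Fin (n-1) → ℂ := fun j l => 4 * ((Complex.normSq (z l) : ℝ) : ℂ) * s j
    with hGdef
  set C : Fin κ → Fin κ → ℂ := fun j l => (if j.val < l.val then
      (4 / (((μ j : ℝ) : ℂ) * ((μ l : ℝ) : ℂ) * (((μ j : ℝ) : ℂ) + ((μ l : ℝ) : ℂ)))) *
        ((((μ j : ℝ) : ℂ) * (starRingEnd ℂ) (z (Fin.castLE hκn1 j)) * (starRingEnd ℂ) (Γ1 l z)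
          - ((μ l : ℝ) : ℂ) * (starRingEnd ℂ) (z (Fin.castLE hκn1 l)) * (starRingEnd ℂ) (Γ1 j z)) *
         (((μ j : ℝ) : ℂ) * z (Fin.castLE hκn1 j) * Γ2 l z
          - ((μ l : ℝ) : ℂ) * z (Fin.castLE hκn1 l) * Γ2 j z))
    else 0) with hCdef
  -- LHS as a double sum
  have hLHS : ∑ p : S0 n κ, (starRingEnd ℂ) (Λ1 p z) * Λ2 p z =
      ∑ j : Fin κ, ∑ l : Fin (n-1), F j l := by
    rw [Finset.sum_congr rfl (fun p _ => key p)]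
    rw [my_sum_subtype (fun q : Fin κ × Fin (n-1) => q.1.val ≤ q.2.val)
      (fun p => (starRingEnd ℂ) (lamRHS hκn1 Γ1 p z) * lamRHS hκn1 Γ2 p z /
        ((muJL μ p : ℝ) : ℂ) ^ 2)]
    rw [Fintype.sum_prod_type]
  -- RHS first term as a double sum
  have hG : ∀ j : Fin κ, ∑ l : Fin (n-1), G j l =
      4 * ((∑ jj, Complex.normSq (z jj) : ℝ) : ℂ) * s j := by
    intro j
    rw [hGdef]
    push_cast
    rw [← Finset.sum_mul, ← Finset.mul_sum]
  have hRHS : 4 * ((∑ jj, Complex.normSq (z jj) : ℝ) : ℂ) * (∑ j, s j)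
      - ∑ j : Fin κ, ∑ l : Fin κ, C j l
      = (∑ j : Fin κ, ∑ l : Fin (n-1), G j l) - ∑ j : Fin κ, ∑ l : Fin κ, C j l := by
    rw [Finset.mul_sum]
    congr 1
    exact Finset.sum_congr rfl fun j _ => (hG j).symm
  -- tail terms cancel
  have htail : ∀ (j : Fin κ) (l : Fin (n-1)), κ ≤ l.val → F j l - G j l = 0 := by
    intro j l hl
    have hjl : j.val ≤ l.val := le_trans (le_of_lt j.isLt) hl
    have hnl : ¬ l.val < κ := not_lt.2 hl
    have e1 : ∀ (Γ : Fin κ → (Fin (n-1) → ℂ) → ℂ),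
        lamRHS hκn1 Γ (⟨(j, l), hjl⟩ : S0 n κ) z = 2 * Complex.I * (z l * Γ j z) := by
      intro Γ; unfold lamRHS; rw [dif_neg hnl]
    have e3 : ((muJL μ (⟨(j, l), hjl⟩ : S0 n κ) : ℝ) : ℂ) ^ 2 = ((μ j : ℝ) : ℂ) := by
      rw [hMsq, dif_neg]
      rintro ⟨-, h2⟩; exact hnl h2
    simp only [hFdef, hGdef, hsdef]
    rw [dif_pos hjl, e1 Γ1, e1 Γ2, e3, hm0]
    rw [← Complex.mul_conj (z l)]
    simp only [map_mul]
    field_simp [hμne j]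
    ring
  -- the per-pair identity for j < l (both < κ)
  have hpairlt : ∀ j l : Fin κ, j.val < l.val →
      (F j (Fin.castLE hκn1 l) - G j (Fin.castLE hκn1 l) + C j l) +
      (F l (Fin.castLE hκn1 j) - G l (Fin.castLE hκn1 j) + C l j) = 0 := by
    intro j l hjl
    have hle : j.val ≤ (Fin.castLE hκn1 l).val := le_of_lt hjl
    have hlκ : (Fin.castLE hκn1 l).val < κ := l.isLt
    have hF1 : F l (Fin.castLE hκn1 j) = 0 := by
      simp only [hFdef]
      rw [dif_neg (show ¬ l.val ≤ (Fin.castLE hκn1 j).val from not_le.2 hjl)]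
    have hC1 : C l j = 0 := by
      simp only [hCdef]
      rw [if_neg (not_lt.2 (le_of_lt hjl))]
    have e1 : ∀ (Γ : Fin κ → (Fin (n-1) → ℂ) → ℂ),
        lamRHS hκn1 Γ (⟨(j, Fin.castLE hκn1 l), hle⟩ : S0 n κ) z =
        2 * Complex.I * (z (Fin.castLE hκn1 j) * Γ l z +
          z (Fin.castLE hκn1 l) * Γ j z) := by
      intro Γ
      unfold lamRHS
      rw [dif_pos hlκ, if_neg (show ¬ j.val = (Fin.castLE hκn1 l).val from ne_of_lt hjl)]
      simp only [Fin.coe_castLE, Fin.eta]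
    have e3 : ((muJL μ (⟨(j, Fin.castLE hκn1 l), hle⟩ : S0 n κ) : ℝ) : ℂ) ^ 2 =
        ((μ j : ℝ) : ℂ) + ((μ l : ℝ) : ℂ) := by
      rw [hMsq, dif_pos (⟨hjl, hlκ⟩ :
        (⟨(j, Fin.castLE hκn1 l), hle⟩ : S0 n κ).val.1.val <
          (⟨(j, Fin.castLE hκn1 l), hle⟩ : S0 n κ).val.2.val ∧
        (⟨(j, Fin.castLE hκn1 l), hle⟩ : S0 n κ).val.2.val < κ)]
      simp only [Fin.coe_castLE, Fin.eta]
    rw [hF1, hC1]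
    simp only [hFdef, hGdef, hCdef, hsdef]
    rw [dif_pos hle, e1 Γ1, e1 Γ2, e3, hm0, if_pos hjl]
    rw [← Complex.mul_conj (z (Fin.castLE hκn1 l)), ← Complex.mul_conj (z (Fin.castLE hκn1 j))]
    simp only [map_mul, map_add]
    field_simp [hμne j, hμne l, hμμne j l]
    ring
  -- the diagonal identity
  have hdiag : ∀ j : Fin κ,
      F j (Fin.castLE hκn1 j) - G j (Fin.castLE hκn1 j) + C j j = 0 := by
    intro j
    have hle : j.val ≤ (Fin.castLE hκn1 j).val := le_refl _
    have hC0 : C j j = 0 := by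
      simp only [hCdef]
      rw [if_neg (lt_irrefl j.val)]
    have e1 : ∀ (Γ : Fin κ → (Fin (n-1) → ℂ) → ℂ),
        lamRHS hκn1 Γ (⟨(j, Fin.castLE hκn1 j), hle⟩ : S0 n κ) z =
        2 * Complex.I * (z (Fin.castLE hκn1 j) * Γ j z) := by
      intro Γ
      unfold lamRHS
      rw [dif_pos (show (Fin.castLE hκn1 j).val < κ from j.isLt),
        if_pos (show j.val = (Fin.castLE hκn1 j).val from rfl)]
    have e3 : ((muJL μ (⟨(j, Fin.castLE hκn1 j), hle⟩ : S0 n κ) : ℝ) : ℂ) ^ 2 =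
        ((μ j : ℝ) : ℂ) := by
      rw [hMsq, dif_neg]
      rintro ⟨h1, -⟩
      exact lt_irrefl _ (show j.val < j.val from h1)
    rw [hC0]
    simp only [hFdef, hGdef, hsdef]
    rw [dif_pos hle, e1 Γ1, e1 Γ2, e3, hm0]
    rw [← Complex.mul_conj (z (Fin.castLE hκn1 j))]
    simp only [map_mul]
    field_simp [hμne j]
    ring
  -- antisymmetrized sum vanishes
  have hzero : ∑ j : Fin κ, ∑ l : Fin κ,
      (F j (Fin.castLE hκn1 l) - G j (Fin.castLE hκn1 l) + C j l) = 0 := by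
    apply my_antisym
    intro j l
    rcases lt_trichotomy j.val l.val with h | h | h
    · exact hpairlt j l h
    · have hjl : j = l := Fin.ext h
      subst hjl
      linear_combination 2 * hdiag j
    · rw [add_comm]; exact hpairlt l j h
  -- assemble
  have hsplit : ∀ j : Fin κ, ∑ l : Fin (n-1), (F j l - G j l) =
      ∑ l : Fin κ, (F j (Fin.castLE hκn1 l) - G j (Fin.castLE hκn1 l)) :=
    fun j => my_sum_split hκn1 _ (fun l hl => htail j l hl)
  have e3 : (∑ j : Fin κ, ∑ l : Fin (n-1), F j l) - (∑ j : Fin κ, ∑ l : Fin (n-1), G j l)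
      + (∑ j : Fin κ, ∑ l : Fin κ, C j l) = 0 := by
    rw [← Finset.sum_sub_distrib, ← Finset.sum_add_distrib, ← hzero]
    refine Finset.sum_congr rfl fun j _ => ?_
    rw [← Finset.sum_sub_distrib, hsplit j, ← Finset.sum_add_distrib]
  rw [hLHS, hRHS]
  linear_combination e3
end

section
/- Let n ≥ 2 and λ, μ ∈ (0, 1), and let F : ℂ^n → ℂ^{3n} be the polynomial map F(z) = (z₁, …, z_{n−2}, λ z_{n−1}, z_n, √(1−λ²) z_{n−1}·(z₁, …, z_{n−1}, μ z_n, √(1−μ²) z_n z)), where z = (z₁, …, z_n). Then for all z ∈ ℂ^n, |F(z)|² − 1 = (|z|² − 1)(1 + (1−λ²)|z_{n−1}|²(1 + (1−μ²)|z_n|²)). Consequently |F(z)| < 1 whenever |z| < 1, |F(z)| = 1 whenever |z| = 1, and F restricts to a proper holomorphic map from B^n into B^{3n}. -/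
open scoped BigOperators

noncomputable section

/-- The open unit ball `B^n ⊂ ℂ^n`. -/
def ballC (n : ℕ) : Set (Fin n → ℂ) := {z | ∑ j, Complex.normSq (z j) < 1}

/-- The defining property of the degree-three monomial map (1.1):
`F = (z₁,…,z_{n-2}, λ z_{n-1}, z_n, √(1-λ²) z_{n-1}·(z₁,…,z_{n-1}, μ z_n, √(1-μ²) z_n z))`. -/
def IsExampleMap (n : ℕ) (lam mu : ℝ) (F : (Fin n → ℂ) → Fin (3*n) → ℂ) : Prop :=
  2 ≤ n ∧ ∀ z, ∀ i : Fin (3*n), F z i =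
    if _ : i.val < n - 2 then z ⟨i.val, by omega⟩
    else if i.val = n - 2 then (lam : ℂ) * z ⟨n-2, by omega⟩
    else if i.val = n - 1 then z ⟨n-1, by omega⟩
    else if _ : i.val < 2*n - 1 then
      (Real.sqrt (1 - lam^2) : ℂ) * z ⟨n-2, by omega⟩ * z ⟨i.val - n, by omega⟩
    else if i.val = 2*n - 1 then
      (Real.sqrt (1 - lam^2) : ℂ) * z ⟨n-2, by omega⟩ * ((mu : ℂ) * z ⟨n-1, by omega⟩)
    else (Real.sqrt (1 - lam^2) : ℂ) * z ⟨n-2, by omega⟩ *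
      ((Real.sqrt (1 - mu^2) : ℂ) * z ⟨n-1, by omega⟩ * z ⟨i.val - 2*n, by have := i.isLt; omega⟩)

end

private lemma sum_if_eq_aux {n : ℕ} (sq : ℕ → ℝ) (p : ℕ) (hp : p < n) (u : ℝ) :
    ∑ k ∈ Finset.range n, (if k = p then u else sq k) =
      (∑ k ∈ Finset.range n, sq k) - sq p + u := by
  have h1 : ∀ k ∈ Finset.range n,
      (if k = p then u else sq k) = sq k + (if k = p then u - sq k else 0) := by
    intro k _; split_ifs with h <;> simp [h]
  rw [Finset.sum_congr rfl h1, Finset.sum_add_distrib, Finset.sum_ite_eq' (Finset.range n) p]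
  simp only [Finset.mem_range, hp, if_true]
  ring

/-- the norm identity for the map (1.1), and the consequence that it
restricts to a proper holomorphic map from `B^n` into `B^{3n}`. -/
theorem example_map_norm_identity (n : ℕ) (hn : 2 ≤ n) (lam mu : ℝ)
    (hlam : lam ∈ Set.Ioo (0:ℝ) 1) (hmu : mu ∈ Set.Ioo (0:ℝ) 1)
    (F : (Fin n → ℂ) → Fin (3*n) → ℂ) (hF : IsExampleMap n lam mu F) :
    (∀ z : Fin n → ℂ, (∑ i, Complex.normSq (F z i)) - 1 =
      ((∑ j, Complex.normSq (z j)) - 1) *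
        (1 + (1 - lam^2) * Complex.normSq (z ⟨n-2, by omega⟩) *
          (1 + (1 - mu^2) * Complex.normSq (z ⟨n-1, by omega⟩)))) ∧
    (∀ z : Fin n → ℂ, ∑ j, Complex.normSq (z j) < 1 → ∑ i, Complex.normSq (F z i) < 1) ∧
    (∀ z : Fin n → ℂ, ∑ j, Complex.normSq (z j) = 1 → ∑ i, Complex.normSq (F z i) = 1) ∧
    Differentiable ℂ F ∧ Set.MapsTo F (ballC n) (ballC (3*n)) ∧
    (∀ K ⊆ ballC (3*n), IsCompact K → IsCompact (ballC n ∩ F ⁻¹' K)) := by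
  obtain ⟨-, hFdef⟩ := hF
  obtain ⟨hl0, hl1⟩ := hlam
  obtain ⟨hm0, hm1⟩ := hmu
  have hln : (0:ℝ) ≤ 1 - lam^2 := by nlinarith
  have hmn : (0:ℝ) ≤ 1 - mu^2 := by nlinarith
  have hsl : Real.sqrt (1 - lam^2) * Real.sqrt (1 - lam^2) = 1 - lam^2 :=
    Real.mul_self_sqrt hln
  have hsm : Real.sqrt (1 - mu^2) * Real.sqrt (1 - mu^2) = 1 - mu^2 :=
    Real.mul_self_sqrt hmn
  -- the key identity
  have key : ∀ z : Fin n → ℂ, (∑ i, Complex.normSq (F z i)) - 1 =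
      ((∑ j, Complex.normSq (z j)) - 1) *
        (1 + (1 - lam^2) * Complex.normSq (z ⟨n-2, by omega⟩) *
          (1 + (1 - mu^2) * Complex.normSq (z ⟨n-1, by omega⟩))) := by
    intro z
    set a := Complex.normSq (z ⟨n-2, by omega⟩) with ha
    set b := Complex.normSq (z ⟨n-1, by omega⟩) with hb
    set sq : ℕ → ℝ := fun k => if h : k < n then Complex.normSq (z ⟨k, h⟩) else 0 with hsq
    set g : ℕ → ℝ := fun k => if h : k < 3*n then Complex.normSq (F z ⟨k, h⟩) else 0 with hg
    have hS : (∑ j, Complex.normSq (z j)) = ∑ k ∈ Finset.range n, sq k := by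
      rw [← Fin.sum_univ_eq_sum_range sq n]
      refine Finset.sum_congr rfl fun i _ => ?_
      simp [hsq, i.isLt]
    have hsum : (∑ i, Complex.normSq (F z i)) = ∑ k ∈ Finset.range (3*n), g k := by
      rw [← Fin.sum_univ_eq_sum_range g (3*n)]
      refine Finset.sum_congr rfl fun i _ => ?_
      simp [hg, i.isLt]
    have hsqa : sq (n-2) = a := by
      simp only [hsq]
      rw [dif_pos (by omega : n - 2 < n)]
    have hsqb : sq (n-1) = b := by
      simp only [hsq]
      rw [dif_pos (by omega : n - 1 < n)]
    have gval1 : ∀ k ∈ Finset.range n, g k = if k = n-2 then lam^2 * a else sq k := by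
      intro k hk
      rw [Finset.mem_range] at hk
      simp only [hg]
      rw [dif_pos (by omega : k < 3*n), hFdef z ⟨k, by omega⟩]
      simp only [Fin.val_mk]
      rcases lt_trichotomy k (n-2) with h | h | h
      · rw [dif_pos h, if_neg (by omega)]
        simp [hsq, hk]
      · subst h
        rw [dif_neg (by omega), if_pos rfl, if_pos rfl]
        rw [Complex.normSq_mul, Complex.normSq_ofReal, ← ha]
        ring
      · have hke : k = n - 1 := by omega
        subst hke
        rw [dif_neg (by omega), if_neg (by omega), if_pos rfl,
          if_neg (by omega : ¬ n - 1 = n - 2), hsqb]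
    have gval2 : ∀ j ∈ Finset.range n, g (n + j) =
        if j = n-1 then (1-lam^2) * a * (mu^2 * b) else (1-lam^2) * a * sq j := by
      intro j hj
      rw [Finset.mem_range] at hj
      simp only [hg]
      rw [dif_pos (by omega : n + j < 3*n), hFdef z ⟨n + j, by omega⟩]
      simp only [Fin.val_mk]
      rw [dif_neg (by omega), if_neg (by omega), if_neg (by omega)]
      rcases lt_or_ge j (n-1) with h | h
      · rw [dif_pos (by omega), if_neg (by omega)]
        simp only [Complex.normSq_mul, Complex.normSq_ofReal]
        have hidx : (⟨n + j - n, by omega⟩ : Fin n) = ⟨j, by omega⟩ := by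
          apply Fin.ext; simp only [Fin.val_mk]; omega
        rw [hidx]
        have hsqj : sq j = Complex.normSq (z ⟨j, by omega⟩) := by simp [hsq, hj]
        rw [hsqj, ← ha, hsl]
      · have hje : j = n - 1 := by omega
        subst hje
        rw [dif_neg (by omega), if_pos (by omega), if_pos rfl]
        simp only [Complex.normSq_mul, Complex.normSq_ofReal]
        rw [← ha, ← hb, hsl]
        ring
    have gval3 : ∀ j ∈ Finset.range n, g (n + (n + j)) =
        (1-lam^2) * a * ((1-mu^2) * (b * sq j)) := by
      intro j hj
      rw [Finset.mem_range] at hj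
      simp only [hg]
      rw [dif_pos (by omega : n + (n + j) < 3*n), hFdef z ⟨n + (n + j), by omega⟩]
      simp only [Fin.val_mk]
      rw [dif_neg (by omega), if_neg (by omega), if_neg (by omega), dif_neg (by omega),
        if_neg (by omega)]
      simp only [Complex.normSq_mul, Complex.normSq_ofReal]
      have hidx : (⟨n + (n + j) - 2*n, by omega⟩ : Fin n) = ⟨j, by omega⟩ := by
        apply Fin.ext; simp only [Fin.val_mk]; omega
      rw [hidx]
      have hsqj : sq j = Complex.normSq (z ⟨j, by omega⟩) := by simp [hsq, hj]
      rw [hsqj, ← ha, ← hb, hsl, hsm]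
      ring
    rw [hsum, show 3*n = n + (n + n) by ring, Finset.sum_range_add, Finset.sum_range_add]
    rw [Finset.sum_congr rfl gval1, Finset.sum_congr rfl gval2,
      Finset.sum_congr rfl gval3]
    rw [sum_if_eq_aux sq (n-2) (by omega) (lam^2 * a),
      sum_if_eq_aux (fun j => (1-lam^2) * a * sq j) (n-1) (by omega)
        ((1-lam^2) * a * (mu^2 * b))]
    simp only [← Finset.mul_sum, ← hS, hsqa, hsqb]
    ring
  have part2 : ∀ z : Fin n → ℂ, ∑ j, Complex.normSq (z j) < 1 →
      ∑ i, Complex.normSq (F z i) < 1 := by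
    intro z hz
    have h := key z
    have ha := Complex.normSq_nonneg (z ⟨n-2, by omega⟩)
    have hb := Complex.normSq_nonneg (z ⟨n-1, by omega⟩)
    nlinarith [mul_nonneg (mul_nonneg hln ha) (mul_nonneg hmn hb),
      mul_nonneg hln ha, mul_nonneg hmn hb]
  have part3 : ∀ z : Fin n → ℂ, ∑ j, Complex.normSq (z j) = 1 →
      ∑ i, Complex.normSq (F z i) = 1 := by
    intro z hz
    have h := key z
    rw [hz] at h
    simp at h
    linarith
  have hdiff : Differentiable ℂ F := by
    have hFeq : F = fun z (i : Fin (3*n)) =>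
      if _ : i.val < n - 2 then z ⟨i.val, by omega⟩
      else if i.val = n - 2 then (lam : ℂ) * z ⟨n-2, by omega⟩
      else if i.val = n - 1 then z ⟨n-1, by omega⟩
      else if _ : i.val < 2*n - 1 then
        (Real.sqrt (1 - lam^2) : ℂ) * z ⟨n-2, by omega⟩ * z ⟨i.val - n, by omega⟩
      else if i.val = 2*n - 1 then
        (Real.sqrt (1 - lam^2) : ℂ) * z ⟨n-2, by omega⟩ * ((mu : ℂ) * z ⟨n-1, by omega⟩)
      else (Real.sqrt (1 - lam^2) : ℂ) * z ⟨n-2, by omega⟩ *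
        ((Real.sqrt (1 - mu^2) : ℂ) * z ⟨n-1, by omega⟩ *
          z ⟨i.val - 2*n, by have := i.isLt; omega⟩) := by
      funext z i; exact hFdef z i
    rw [hFeq, differentiable_pi]
    intro i
    have hc : ∀ j : Fin n, Differentiable ℂ (fun z : Fin n → ℂ => z j) := fun j =>
      differentiable_pi.mp differentiable_id j
    by_cases h1 : i.val < n - 2
    · simp only [dif_pos h1]; exact hc _
    by_cases h2 : i.val = n - 2
    · simp only [dif_neg h1, if_pos h2]; exact (hc _).const_mul _
    by_cases h3 : i.val = n - 1
    · simp only [dif_neg h1, if_neg h2, if_pos h3]; exact hc _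
    by_cases h4 : i.val < 2*n - 1
    · simp only [dif_neg h1, if_neg h2, if_neg h3, dif_pos h4]
      exact ((hc _).const_mul _).mul (hc _)
    by_cases h5 : i.val = 2*n - 1
    · simp only [dif_neg h1, if_neg h2, if_neg h3, dif_neg h4, if_pos h5]
      exact ((hc _).const_mul _).mul ((hc _).const_mul _)
    · simp only [dif_neg h1, if_neg h2, if_neg h3, dif_neg h4, if_neg h5]
      exact ((hc _).const_mul _).mul (((hc _).const_mul _).mul (hc _))
  refine ⟨key, part2, part3, hdiff, fun z hz => part2 z hz, ?_⟩
  intro K hK hKc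
  have hset : ballC n ∩ F ⁻¹' K =
      {z : Fin n → ℂ | ∑ j, Complex.normSq (z j) ≤ 1} ∩ F ⁻¹' K := by
    ext z
    simp only [Set.mem_inter_iff, Set.mem_setOf_eq, Set.mem_preimage, ballC]
    constructor
    · rintro ⟨h1, h2⟩; exact ⟨le_of_lt h1, h2⟩
    · rintro ⟨h1, h2⟩
      refine ⟨lt_of_le_of_ne h1 fun he => ?_, h2⟩
      have := part3 z he
      have := hK h2
      simp only [ballC, Set.mem_setOf_eq] at this
      linarith
  rw [hset]
  have hcont : Continuous fun z : Fin n → ℂ => ∑ j, Complex.normSq (z j) := by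
    apply continuous_finset_sum
    intro j _
    exact Complex.continuous_normSq.comp (continuous_apply j)
  have hclosed : IsClosed ({z : Fin n → ℂ | ∑ j, Complex.normSq (z j) ≤ 1} ∩ F ⁻¹' K) :=
    (isClosed_le hcont continuous_const).inter (hKc.isClosed.preimage hdiff.continuous)
  refine IsCompact.of_isClosed_subset (isCompact_closedBall (0 : Fin n → ℂ) 1) hclosed ?_
  rintro z ⟨h1, -⟩
  rw [Metric.mem_closedBall, dist_zero_right]
  rw [pi_norm_le_iff_of_nonneg zero_le_one]
  intro i
  have h2 : Complex.normSq (z i) ≤ 1 := by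
    refine le_trans ?_ h1
    exact Finset.single_le_sum (fun j _ => Complex.normSq_nonneg (z j)) (Finset.mem_univ i)
  have h3 : ‖z i‖ ^ 2 ≤ 1 := by
    rwa [Complex.sq_norm]
  nlinarith [norm_nonneg (z i)]
end
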